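/- arXiv:2112.06187 — 11 statements merged into one kernel-verified Lean document; each statement's English description precedes it below -/
import Mathlib

section
/- For all integers m ≥ 3 and n ≥ 0, a_{m+n} = a_{m-1}·a_{n+2} + a_{m-3}·a_{n+1} + a_{m-2}·a_n. -/
def narayana : ℕ → ℕ
  | 0 => 0
  | 1 => 1
  | 2 => 1
  | n + 3 => narayana (n + 2) + narayana n

lemma narayana_rec (n : ℕ) : narayana (n + 3) = narayana (n + 2) + narayana n := rfl

lemma narayana_aux (k : ℕ) : ∀ n, narayana (k + 3 + n) =
    narayana (k + 2) * narayana (n + 2) + narayana k * narayana (n + 1) +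
      narayana (k + 1) * narayana n := by
  intro n
  induction n using Nat.strong_induction_on with
  | _ n ih =>
    match n with
    | 0 => simp [narayana]
    | 1 =>
      have h1 : k + 3 + 1 = (k + 1) + 3 := by ring
      rw [h1, narayana_rec]
      have h2 : k + 1 + 2 = k + 3 := by ring
      rw [h2, narayana_rec]
      simp [narayana]
    | 2 =>
      have h1 : k + 3 + 2 = (k + 2) + 3 := by ring
      rw [h1, narayana_rec]
      have h2 : k + 2 + 2 = (k + 1) + 3 := by ring
      rw [h2, narayana_rec]
      have h3 : k + 1 + 2 = k + 3 := by ring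
      rw [h3, narayana_rec]
      simp [narayana]
      ring
    | n + 3 =>
      have A : narayana (k + 3 + (n + 3)) = narayana (k + 3 + (n + 2)) + narayana (k + 3 + n) := by
        have h : k + 3 + (n + 3) = (k + 3 + n) + 3 := by ring
        have h' : k + 3 + n + 2 = k + 3 + (n + 2) := by ring
        rw [h, narayana_rec, h']
      have B : narayana (n + 3 + 2) = narayana (n + 4) + narayana (n + 2) := by
        have h : n + 3 + 2 = (n + 2) + 3 := by ring
        have h' : n + 2 + 2 = n + 4 := by ring
        rw [h, narayana_rec, h']
      have C : narayana (n + 3 + 1) = narayana (n + 3) + narayana (n + 1) := by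
        have h : n + 3 + 1 = (n + 1) + 3 := by ring
        have h' : n + 1 + 2 = n + 3 := by ring
        rw [h, narayana_rec, h']
      have D : narayana (n + 3) = narayana (n + 2) + narayana n := narayana_rec n
      have e2 : n + 2 + 2 = n + 4 := by ring
      have e1 : n + 2 + 1 = n + 3 := by ring
      have i2 := ih (n + 2) (by omega)
      rw [e2, e1] at i2
      have i0 := ih n (by omega)
      rw [A, i2, i0, B, C, D]
      ring

theorem narayana_add (m n : ℕ) (hm : 3 ≤ m) :
    narayana (m + n) = narayana (m - 1) * narayana (n + 2) +
      narayana (m - 3) * narayana (n + 1) + narayana (m - 2) * narayana n := by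
  obtain ⟨k, rfl⟩ : ∃ k, m = k + 3 := ⟨m - 3, by omega⟩
  simpa using narayana_aux k n
end

section
/- For all integers m ≥ 3 and n ≥ 0, a_{m+n} = a_{m-1}·a_{n+2} + (a_m - a_{m-1})·a_{n+1} + a_{m-2}·a_n. -/
theorem narayana_add' (m n : ℕ) (hm : 3 ≤ m) :
    narayana (m + n) = narayana (m - 1) * narayana (n + 2) +
      (narayana m - narayana (m - 1)) * narayana (n + 1) +
      narayana (m - 2) * narayana n := by
  obtain ⟨k, rfl⟩ : ∃ k, m = k + 3 := ⟨m - 3, by omega⟩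
  rw [show k + 3 - 1 = k + 2 by omega, show k + 3 - 2 = k + 1 by omega,
    narayana_rec k, Nat.add_sub_cancel_left]
  exact narayana_aux k n
end

section
/- The sequence of Narayana numbers reduced modulo 3 is periodic with period 8, i.e., for all n ≥ 0, a_{n+8} ≡ a_n (mod 3). -/
theorem narayana_mod_three_periodic (n : ℕ) :
    narayana (n + 8) ≡ narayana n [MOD 3] := by
  induction n using Nat.strong_induction_on with
  | _ n ih =>
    match n with
    | 0 => decide
    | 1 => decide
    | 2 => decide
    | (m + 3) =>
      have h1 := ih (m + 2) (by omega)
      have h2 := ih m (by omega)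
      show narayana (m + 10) + narayana (m + 8) ≡ _ [MOD 3]
      exact Nat.ModEq.add h1 h2
end

section
/- For all integers s ≥ 1 and n ≥ 1, a_{8s·3^n} ≡ 2s·3^(n+2) (mod 3^(n+3)). -/
set_option linter.unnecessarySeqFocus false
set_option linter.unreachableTactic false
set_option linter.unusedTactic false

@[ext] structure Nar where
  p : ℤ
  q : ℤ
  r : ℤ

namespace Nar

instance : Zero Nar := ⟨⟨0,0,0⟩⟩
instance : One Nar := ⟨⟨1,0,0⟩⟩
instance : Add Nar := ⟨fun a b => ⟨a.p+b.p, a.q+b.q, a.r+b.r⟩⟩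
instance : Neg Nar := ⟨fun a => ⟨-a.p, -a.q, -a.r⟩⟩
instance : Mul Nar := ⟨fun a b =>
  ⟨a.p*b.p + a.q*b.r + a.r*b.q + a.r*b.r,
   a.p*b.q + a.q*b.p + a.r*b.r,
   a.p*b.r + a.q*b.q + a.r*b.p + a.q*b.r + a.r*b.q + a.r*b.r⟩⟩

@[simp] lemma zero_p : (0:Nar).p = 0 := rfl
@[simp] lemma zero_q : (0:Nar).q = 0 := rfl
@[simp] lemma zero_r : (0:Nar).r = 0 := rfl
@[simp] lemma one_p : (1:Nar).p = 1 := rfl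
@[simp] lemma one_q : (1:Nar).q = 0 := rfl
@[simp] lemma one_r : (1:Nar).r = 0 := rfl
@[simp] lemma add_p (a b : Nar) : (a+b).p = a.p+b.p := rfl
@[simp] lemma add_q (a b : Nar) : (a+b).q = a.q+b.q := rfl
@[simp] lemma add_r (a b : Nar) : (a+b).r = a.r+b.r := rfl
@[simp] lemma neg_p (a : Nar) : (-a).p = -a.p := rfl
@[simp] lemma neg_q (a : Nar) : (-a).q = -a.q := rfl
@[simp] lemma neg_r (a : Nar) : (-a).r = -a.r := rfl
@[simp] lemma mul_p (a b : Nar) :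
    (a*b).p = a.p*b.p + a.q*b.r + a.r*b.q + a.r*b.r := rfl
@[simp] lemma mul_q (a b : Nar) :
    (a*b).q = a.p*b.q + a.q*b.p + a.r*b.r := rfl
@[simp] lemma mul_r (a b : Nar) :
    (a*b).r = a.p*b.r + a.q*b.q + a.r*b.p + a.q*b.r + a.r*b.q + a.r*b.r := rfl

instance : CommRing Nar where
  add_assoc a b c := by ext <;> simp <;> ring
  zero_add a := by ext <;> simp
  add_zero a := by ext <;> simp
  add_comm a b := by ext <;> simp <;> ring
  left_distrib a b c := by ext <;> simp <;> ring
  right_distrib a b c := by ext <;> simp <;> ring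
  zero_mul a := by ext <;> simp
  mul_zero a := by ext <;> simp
  mul_assoc a b c := by ext <;> simp <;> ring
  one_mul a := by ext <;> simp
  mul_one a := by ext <;> simp
  neg_add_cancel a := by ext <;> simp
  mul_comm a b := by ext <;> simp <;> ring
  nsmul := nsmulRec
  zsmul := zsmulRec
  natCast n := ⟨n,0,0⟩
  natCast_zero := rfl
  natCast_succ n := rfl
  intCast n := ⟨n,0,0⟩
  intCast_ofNat n := rfl
  intCast_negSucc n := rfl

@[simp] lemma natCast_p (n : ℕ) : ((n:Nar)).p = n := rfl
@[simp] lemma natCast_q (n : ℕ) : ((n:Nar)).q = 0 := rfl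
@[simp] lemma natCast_r (n : ℕ) : ((n:Nar)).r = 0 := rfl

def X : Nar := ⟨0,1,0⟩

@[simp] lemma pow_three (j : ℕ) : ((3:Nar)^j) = ⟨(3:ℤ)^j, 0, 0⟩ := by
  induction j with
  | zero => rfl
  | succ j ih => rw [pow_succ, ih, show (3:Nar) = (⟨3,0,0⟩:Nar) from rfl]
                 ext <;> simp [pow_succ] <;> ring

def D : Nar := ⟨1,7,8⟩

lemma Xpow (j : ℕ) :
    X ^ (j+3) = ⟨(narayana (j+1) : ℤ), (narayana j : ℤ), (narayana (j+2) : ℤ)⟩ := by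
  induction j with
  | zero =>
      show X^3 = _
      ext <;> simp [pow_succ, X, narayana]
  | succ j ih =>
      have : j + 1 + 3 = (j + 3) + 1 := by ring
      rw [this, pow_succ, ih]
      ext <;> simp [X, narayana] <;> push_cast <;> ring

lemma key : ∀ k : ℕ, ∃ e : Nar,
    X ^ (8 * 3 ^ (k+1)) = 1 + (3:Nar)^(k+2) * D + (3:Nar)^(k+4) * e := by
  intro k
  induction k with
  | zero =>
      refine ⟨⟨23,15,33⟩, ?_⟩
      have h24 : (8 * 3 ^ 1 : ℕ) = 21 + 3 := by norm_num
      have e21 : narayana 21 = 1278 := by rfl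
      have e22 : narayana 22 = 1873 := by rfl
      have e23 : narayana 23 = 2745 := by rfl
      rw [h24, Xpow 21, show (3:Nar) = (⟨3,0,0⟩:Nar) from rfl]
      ext <;> simp [D, pow_succ, e21, e22, e23] <;> norm_num
  | succ k ih =>
      obtain ⟨e, he⟩ := ih
      refine ⟨e + (3:Nar)^k * (D + (3:Nar)^2 * e)^2
        + (3:Nar)^(2*k+1) * (D + (3:Nar)^2 * e)^3, ?_⟩
      have h1 : 8 * 3 ^ (k+2) = 8 * 3 ^ (k+1) * 3 := by ring
      rw [h1, pow_mul, he]
      ring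

lemma spow (k : ℕ) (e : Nar) : ∀ s : ℕ, ∃ f : Nar,
    (1 + (3:Nar)^(k+2) * D + (3:Nar)^(k+4) * e) ^ s
      = 1 + (s:Nar) * (3:Nar)^(k+2) * D + (3:Nar)^(k+4) * f := by
  intro s
  induction s with
  | zero => exact ⟨0, by simp⟩
  | succ s ih =>
      obtain ⟨f, hf⟩ := ih
      refine ⟨f + e + (s:Nar) * (3:Nar)^k * D^2 + (s:Nar) * (3:Nar)^(k+2) * (D*e)
        + (3:Nar)^(k+2) * (f*D) + (3:Nar)^(k+4) * (f*e), ?_⟩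
      rw [pow_succ, hf]
      push_cast
      ring

end Nar

theorem narayana_cong_zero (s n : ℕ) (hs : 1 ≤ s) (hn : 1 ≤ n) :
    narayana (8 * s * 3 ^ n) ≡ 2 * s * 3 ^ (n + 2) [MOD 3 ^ (n + 3)] := by
  obtain ⟨k, rfl⟩ : ∃ k, n = k + 1 := ⟨n-1, (Nat.succ_pred_eq_of_pos hn).symm⟩
  obtain ⟨e, he⟩ := Nar.key k
  obtain ⟨f, hf⟩ := Nar.spow k e s
  have hm : 8 * s * 3 ^ (k+1) = (8 * 3 ^ (k+1)) * s := by ring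
  have hX : Nar.X ^ (8 * s * 3 ^ (k+1))
      = 1 + (s:Nar) * (3:Nar)^(k+2) * Nar.D + (3:Nar)^(k+4) * f := by
    rw [hm, pow_mul, he, hf]
  obtain ⟨j, hj⟩ : ∃ j, 8 * s * 3 ^ (k+1) = j + 3 := by
    have h1 : 1 ≤ 3^(k+1) := Nat.one_le_pow _ _ (by norm_num)
    have h2 : 3 ≤ 8 * s * 3 ^ (k+1) := by nlinarith
    exact ⟨8 * s * 3 ^ (k+1) - 3, by omega⟩
  rw [hj, Nar.Xpow j] at hX
  have hq := congrArg Nar.q hX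
  have hr := congrArg Nar.r hX
  simp [Nar.D] at hq hr
  push_cast at hq hr
  have hval : narayana (j+3) = narayana (j+2) + narayana j := by simp [narayana]
  rw [Nat.modEq_iff_dvd]
  refine ⟨-((s:ℤ) + f.q + f.r), ?_⟩
  rw [hj, hval]
  push_cast
  linear_combination -hq - hr
end

section
/- For all integers s ≥ 1 and n ≥ 1, a_{8s·3^n + 1} ≡ 1 + s·3^(n+1) + 2s·3^(n+2) (mod 3^(n+3)). -/
namespace NarayanaAux

abbrev Mat := Matrix (Fin 3) (Fin 3) ℤ

def M : Mat := !![1,0,1;1,0,0;0,1,0]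
def E : Mat := !![7,8,6;6,1,8;8,7,1]
def K0 : Mat := !![72,33,49;49,23,33;33,15,23]

lemma hM2 : M ^ 2 = !![1,1,1;1,0,1;1,0,0] := by
  rw [sq]; norm_num [M, Matrix.mul_fin_three]

lemma hM3e : M ^ 3 = !![2,1,1;1,1,1;1,0,1] := by
  have : M ^ 3 = M ^ 2 * M := by rw [← pow_succ]
  rw [this, hM2]
  norm_num [M, Matrix.mul_fin_three]

lemma hM3 : M ^ 3 = M ^ 2 + 1 := by
  rw [hM3e, hM2, Matrix.one_fin_three]
  ext i j; fin_cases i <;> fin_cases j <;> norm_num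

lemma hM6 : M ^ 6 = !![6,3,4;4,2,3;3,1,2] := by
  have : M ^ 6 = (M ^ 3) ^ 2 := by rw [← pow_mul]
  rw [this, hM3e, sq]
  norm_num [Matrix.mul_fin_three]

lemma hM12 : M ^ 12 = !![60,28,41;41,19,28;28,13,19] := by
  have : M ^ 12 = (M ^ 6) ^ 2 := by rw [← pow_mul]
  rw [this, hM6, sq]
  norm_num [Matrix.mul_fin_three]

lemma hM24 : M ^ 24 = !![5896,2745,4023;4023,1873,2745;2745,1278,1873] := by
  have : M ^ 24 = (M ^ 12) ^ 2 := by rw [← pow_mul]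
  rw [this, hM12, sq]
  norm_num [Matrix.mul_fin_three]

lemma entry : ∀ m : ℕ, (M ^ m) 1 0 + (M ^ m) 1 1 = (narayana (m+1) : ℤ)
  | 0 => by simp [narayana, Matrix.one_apply]
  | 1 => by rw [pow_one]; norm_num [M, narayana]
  | 2 => by rw [hM2]; norm_num [narayana]
  | (m+3) => by
      have h2 := entry (m+2)
      have h0 := entry m
      have hp : M ^ (m+3) = M ^ (m+2) + M ^ m := by
        calc M ^ (m+3) = M ^ m * M ^ 3 := by rw [← pow_add]
        _ = M ^ m * (M ^ 2 + 1) := by rw [hM3]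
        _ = M ^ (m+2) + M ^ m := by rw [mul_add, mul_one, ← pow_add]
      rw [hp]
      simp only [Matrix.add_apply]
      have hnar : narayana (m+3+1) = narayana (m+2+1) + narayana (m+1) := rfl
      rw [hnar]
      push_cast
      linarith

lemma pows (X : Mat) : ∀ s : ℕ, ∃ K : Mat, (1 + X) ^ s = 1 + (s:ℤ) • X + X ^ 2 * K := by
  intro s
  induction s with
  | zero => exact ⟨0, by simp⟩
  | succ s ih =>
    obtain ⟨K, hK⟩ := ih
    refine ⟨(s:ℤ) • 1 + K + K * X, ?_⟩
    rw [pow_succ, hK]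
    push_cast
    rw [add_smul, one_smul]; noncomm_ring

lemma cube_aux (m : ℕ) (F : Mat) :
    (1 + (3:ℤ)^(m+2) • F) ^ 3
      = 1 + (3:ℤ)^(m+3) • (F + (9:ℤ) • ((3:ℤ)^m • F^2 + (3:ℤ)^(2*m+1) • F^3)) := by
  have h3 : ∀ X : Mat, (1 + X) ^ 3 = 1 + 3 • X + 3 • X ^ 2 + X ^ 3 := by
    intro X; noncomm_ring
  rw [h3]
  rw [smul_pow, smul_pow, smul_add]
  module

lemma key : ∀ m : ℕ, ∃ K : Mat, M ^ (8 * 3 ^ (m+1)) = 1 + (3:ℤ)^(m+2) • (E + (9:ℤ) • K)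
  | 0 => by
      refine ⟨K0, ?_⟩
      rw [show 8 * 3 ^ (0+1) = 24 by norm_num, hM24]
      ext i j
      fin_cases i <;> fin_cases j <;>
        simp [E, K0, Matrix.one_fin_three, Matrix.vecHead, Matrix.vecTail] <;> norm_num
  | (m+1) => by
      obtain ⟨K, hK⟩ := key m
      refine ⟨K + (3:ℤ)^m • (E + (9:ℤ) • K) ^ 2 + (3:ℤ)^(2*m+1) • (E + (9:ℤ) • K) ^ 3, ?_⟩
      have h1 : M ^ (8 * 3 ^ (m+1+1)) = (M ^ (8 * 3 ^ (m+1))) ^ 3 := by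
        rw [← pow_mul]; ring_nf
      rw [h1, hK]
      set F : Mat := E + (9:ℤ) • K with hF
      rw [cube_aux]
      congr 1
      congr 1
      generalize (3:ℤ)^m • F^2 = A
      generalize (3:ℤ)^(2*m+1) • F^3 = B
      rw [hF]
      abel

end NarayanaAux

open NarayanaAux in
theorem narayana_cong_one (s n : ℕ) (hs : 1 ≤ s) (hn : 1 ≤ n) :
    narayana (8 * s * 3 ^ n + 1) ≡ 1 + s * 3 ^ (n + 1) + 2 * s * 3 ^ (n + 2) [MOD 3 ^ (n + 3)] := by
  obtain ⟨m, rfl⟩ : ∃ m, n = m + 1 := ⟨n - 1, (Nat.succ_pred_eq_of_pos hn).symm⟩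
  obtain ⟨K, hK⟩ := key m
  set F : Mat := E + (9:ℤ) • K with hF
  set X : Mat := (3:ℤ)^(m+2) • F with hX
  obtain ⟨Kp, hKp⟩ := pows X s
  have hm : M ^ (8 * s * 3 ^ (m+1)) = 1 + (s:ℤ) • X + X ^ 2 * Kp := by
    rw [show 8 * s * 3 ^ (m+1) = (8 * 3 ^ (m+1)) * s by ring, pow_mul, hK]
    exact hKp
  have hent := entry (8 * s * 3 ^ (m+1))
  rw [hm] at hent
  set k0 : ℤ := K 1 0 with hk0
  set k1 : ℤ := K 1 1 with hk1
  set g0 : ℤ := (F ^ 2 * Kp) 1 0 with hg0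
  set g1 : ℤ := (F ^ 2 * Kp) 1 1 with hg1
  have hX2 : X ^ 2 * Kp = (3:ℤ)^(2*m+4) • (F ^ 2 * Kp) := by
    rw [hX, smul_pow, smul_mul_assoc, ← pow_mul]
    congr 1; ring
  have e10 : E 1 0 = 6 := by norm_num [E]
  have e11 : E 1 1 = 1 := by norm_num [E]
  have hXapp : ∀ j, X 1 j = (3:ℤ)^(m+2) * (E 1 j + 9 * K 1 j) := by
    intro j
    rw [hX, hF, Matrix.smul_apply, Matrix.add_apply, Matrix.smul_apply,
      smul_eq_mul, smul_eq_mul]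
  have hval : (narayana (8 * s * 3 ^ (m+1) + 1) : ℤ) =
      1 + (s:ℤ) * ((3:ℤ)^(m+2) * (6 + 9 * k0) + (3:ℤ)^(m+2) * (1 + 9 * k1))
        + (3:ℤ)^(2*m+4) * (g0 + g1) := by
    rw [← hent, hX2]
    simp only [Matrix.add_apply, Matrix.smul_apply, smul_eq_mul, hXapp, e10, e11,
      ← hk0, ← hk1, ← hg0, ← hg1]
    rw [Matrix.one_apply_ne (by decide : (1 : Fin 3) ≠ 0), Matrix.one_apply_eq]
    ring
  rw [Nat.modEq_iff_dvd]
  refine ⟨-((s:ℤ) * (k0 + k1) + (3:ℤ)^m * (g0 + g1)), ?_⟩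
  push_cast
  rw [hval]
  ring
end

section
/- For all integers s ≥ 1 and n ≥ 1, a_{8s·3^n + 2} ≡ 1 + 2s·3^(n+2) (mod 3^(n+3)). -/
def b : ℕ → ℤ
  | 0 => 1
  | 1 => 0
  | 2 => 0
  | n + 3 => b (n + 2) + b n

lemma b_add3 (n : ℕ) : b (n + 3) = b (n + 2) + b n := rfl

lemma narayana_eq_b : ∀ k : ℕ, (narayana k : ℤ) = b (k + 2)
  | 0 => by decide
  | 1 => by decide
  | 2 => by decide
  | (k+3) => by
    show ((narayana (k+2) + narayana k : ℕ) : ℤ) = b (k + 5)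
    push_cast
    rw [narayana_eq_b (k+2), narayana_eq_b k, show k + 5 = (k + 2) + 3 from rfl,
      b_add3 (k+2)]

lemma E : ∀ (k m : ℕ), b (m + k) =
    b m * b k + b (m + 1) * (b (k + 2) - b (k + 1)) + b (m + 2) * b (k + 1)
  | 0, m => by simp [b]
  | 1, m => by show b (m+1) = _; simp [b]
  | 2, m => by show b (m+2) = _; simp [b]
  | (k+3), m => by
    have h2 := E (k + 2) m
    have h0 := E k m
    have key : b (m + (k + 3)) = b (m + (k + 2)) + b (m + k) := by
      have := b_add3 (m + k)
      rw [show m + k + 3 = m + (k+3) by ring, show m + k + 2 = m + (k+2) by ring] at this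
      exact this
    rw [key, h2, h0, b_add3 (k+2), b_add3 (k+1), b_add3 k]
    ring

lemma E1 (m k : ℕ) : b (m + k + 1) =
    b (m + 1) * b k + b (m + 2) * (b (k + 2) - b (k + 1)) + (b (m + 2) + b m) * b (k + 1) := by
  have := E k (m + 1)
  rw [show m + 1 + k = m + k + 1 by ring, show m + 1 + 1 = m + 2 by ring,
    show m + 1 + 2 = m + 3 by ring, b_add3 m] at this
  exact this

lemma E2 (m k : ℕ) : b (m + k + 2) =
    b (m + 2) * b k + (b (m + 2) + b m) * (b (k + 2) - b (k + 1)) +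
      (b (m + 2) + b m + b (m + 1)) * b (k + 1) := by
  have := E k (m + 2)
  rw [show m + 2 + k = m + k + 2 by ring, show m + 2 + 1 = m + 3 by ring,
    show m + 2 + 2 = m + 1 + 3 by ring, b_add3 m, b_add3 (m+1), b_add3 m] at this
  rw [this]

lemma keyA : ∀ m : ℕ, ∃ d1 d2 d3 : ℤ,
    b (8 * 3 ^ (m + 1)) = 1 + 9 * 3 ^ m + 81 * 3 ^ m * d1 ∧
    b (8 * 3 ^ (m + 1) + 1) = 72 * 3 ^ m + 81 * 3 ^ m * d2 ∧
    b (8 * 3 ^ (m + 1) + 2) = 54 * 3 ^ m + 81 * 3 ^ m * d3 := by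
  intro m
  induction m with
  | zero => exact ⟨23, 33, 49, by decide, by decide, by decide⟩
  | succ m ih =>
    obtain ⟨d1, d2, d3, h1, h2, h3⟩ := ih
    set N := 8 * 3 ^ (m + 1) with hN
    have e0 := E N N
    have e1 := E1 N N
    have e2 := E2 N N
    have f0 := E N (N + N)
    have f1 := E1 (N + N) N
    have f2 := E2 (N + N) N
    rw [e0, e1, e2, h1, h2, h3] at f0 f1 f2
    set t : ℤ := 3 ^ m with ht
    refine ⟨(d1 + 33*t + 144*t*d3 - 36*t*d2 + 162*t*d2*d3 - 81*t*d2*d2 + 18*t*d1 + 81*t*d1*d1 + 2475*t*t + 4212*t*t*d3 + 4374*t*t*d3*d3 + 2187*t*t*d3*d3*d3 + 4860*t*t*d2 + 1458*t*t*d2*d3 + 5103*t*t*d2*d2 + 2187*t*t*d2*d2*d2 + 2673*t*t*d1 + 11664*t*t*d1*d3 - 2916*t*t*d1*d2 + 13122*t*t*d1*d2*d3 - 6561*t*t*d1*d2*d2 + 729*t*t*d1*d1 + 2187*t*t*d1*d1*d1),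
      (d2 + 52*t + 108*t*d3 + 81*t*d3*d3 + 18*t*d2 + 144*t*d1 + 162*t*d1*d2 + 2964*t*t + 9072*t*t*d3 + 5103*t*t*d3*d3 + 2187*t*t*d3*d3*d3 + 2673*t*t*d2 + 11664*t*t*d2*d3 - 1458*t*t*d2*d2 + 6561*t*t*d2*d2*d3 - 2187*t*t*d2*d2*d2 + 4212*t*t*d1 + 8748*t*t*d1*d3 + 6561*t*t*d1*d3*d3 + 1458*t*t*d1*d2 + 5832*t*t*d1*d1 + 6561*t*t*d1*d1*d2),
      (d3 + 112*t + 126*t*d3 + 81*t*d3*d3 + 144*t*d2 + 81*t*d2*d2 + 108*t*d1 + 162*t*d1*d3 + 4194*t*t + 11745*t*t*d3 + 10935*t*t*d3*d3 + 2187*t*t*d3*d3*d3 + 4212*t*t*d2 + 8748*t*t*d2*d3 + 6561*t*t*d2*d3*d3 + 729*t*t*d2*d2 + 9072*t*t*d1 + 10206*t*t*d1*d3 + 6561*t*t*d1*d3*d3 + 11664*t*t*d1*d2 + 6561*t*t*d1*d2*d2 + 4374*t*t*d1*d1 + 6561*t*t*d1*d1*d3), ?_, ?_, ?_⟩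
    · rw [show 8 * 3 ^ (m + 1 + 1) = N + N + N by rw [hN]; ring, f0, pow_succ, ← ht]
      ring
    · rw [show 8 * 3 ^ (m + 1 + 1) + 1 = N + N + N + 1 by rw [hN]; ring, f1, pow_succ, ← ht]
      ring
    · rw [show 8 * 3 ^ (m + 1 + 1) + 2 = N + N + N + 2 by rw [hN]; ring, f2, pow_succ, ← ht]
      ring

lemma keyB (m : ℕ) : ∀ s : ℕ, ∃ c1 c2 c3 : ℤ,
    b (8 * s * 3 ^ (m + 1)) = 1 + 9 * s * 3 ^ m + 81 * 3 ^ m * c1 ∧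
    b (8 * s * 3 ^ (m + 1) + 1) = 72 * s * 3 ^ m + 81 * 3 ^ m * c2 ∧
    b (8 * s * 3 ^ (m + 1) + 2) = 54 * s * 3 ^ m + 81 * 3 ^ m * c3 := by
  intro s
  induction s with
  | zero =>
    refine ⟨0, 0, 0, ?_, ?_, ?_⟩ <;>
      · rw [show 8 * 0 * 3 ^ (m + 1) = 0 by ring]
        push_cast
        simp [b]
  | succ s ih =>
    obtain ⟨c1, c2, c3, h1, h2, h3⟩ := ih
    obtain ⟨d1, d2, d3, g1, g2, g3⟩ := keyA m
    set N := 8 * 3 ^ (m + 1) with hN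
    set K := 8 * s * 3 ^ (m + 1) with hK
    have f0 := E N K
    have f1 := E1 K N
    have f2 := E2 K N
    rw [h1, h2, h3, g1, g2, g3] at f0 f1 f2
    set t : ℤ := 3 ^ m with ht
    refine ⟨(c1 + d1 + 72*t*c3 - 18*t*c2 + 9*t*c1 + 33*t*(s:ℤ) + 81*t*d3*c2 + 72*t*d3*(s:ℤ) + 81*t*d2*c3 - 81*t*d2*c2 - 18*t*d2*(s:ℤ) + 81*t*d1*c1 + 9*t*d1*(s:ℤ)),
      (c2 + d2 + 54*t*c3 + 9*t*c2 + 72*t*c1 + 52*t*(s:ℤ) + 81*t*d3*c3 + 54*t*d3*(s:ℤ) + 81*t*d2*c1 + 9*t*d2*(s:ℤ) + 81*t*d1*c2 + 72*t*d1*(s:ℤ)),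
      (c3 + d3 + 63*t*c3 + 72*t*c2 + 54*t*c1 + 112*t*(s:ℤ) + 81*t*d3*c3 + 81*t*d3*c1 + 63*t*d3*(s:ℤ) + 81*t*d2*c2 + 72*t*d2*(s:ℤ) + 81*t*d1*c3 + 54*t*d1*(s:ℤ)), ?_, ?_, ?_⟩
    · rw [show 8 * (s + 1) * 3 ^ (m + 1) = K + N by rw [hK, hN]; ring, f0]
      push_cast
      ring
    · rw [show 8 * (s + 1) * 3 ^ (m + 1) + 1 = K + N + 1 by rw [hK, hN]; ring, f1]
      push_cast
      ring
    · rw [show 8 * (s + 1) * 3 ^ (m + 1) + 2 = K + N + 2 by rw [hK, hN]; ring, f2]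
      push_cast
      ring

theorem narayana_cong_two (s n : ℕ) (hs : 1 ≤ s) (hn : 1 ≤ n) :
    narayana (8 * s * 3 ^ n + 2) ≡ 1 + 2 * s * 3 ^ (n + 2) [MOD 3 ^ (n + 3)] := by
  obtain ⟨m, rfl⟩ : ∃ m, n = m + 1 := ⟨n - 1, by omega⟩
  rw [Nat.modEq_iff_dvd]
  obtain ⟨c1, c2, c3, h1, h2, h3⟩ := keyB m s
  have g := E 4 (8 * s * 3 ^ (m + 1))
  push_cast
  rw [narayana_eq_b]
  rw [show 8 * s * 3 ^ (m + 1) + 2 + 2 = 8 * s * 3 ^ (m + 1) + 4 by ring]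
  rw [g, h1, h2, h3, show b 4 = 1 from rfl, show b 5 = 1 from rfl, show b 6 = 2 from rfl]
  exact ⟨-(s:ℤ) - c1 - c2 - c3, by push_cast; ring⟩
end

section
/- If n ≥ 1 and n ≡ 1, 2, 3, 4, or 6 (mod 8), then a_n is not divisible by 3. -/
lemma narayana_mod_three_period : ∀ n, narayana (n + 8) % 3 = narayana n % 3 := by
  intro n
  induction n using Nat.strong_induction_on with
  | _ n ih =>
    match n with
    | 0 => norm_num [narayana]
    | 1 => norm_num [narayana]
    | 2 => norm_num [narayana]
    | (m+3) =>
      have h1 := ih (m+2) (by omega)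
      have h2 := ih m (by omega)
      show narayana (m + 11) % 3 = narayana (m + 3) % 3
      have e1 : narayana (m + 11) = narayana (m + 10) + narayana (m + 8) := rfl
      have e2 : narayana (m + 3) = narayana (m + 2) + narayana m := rfl
      rw [e1, e2, Nat.add_mod, Nat.add_mod (narayana (m+2))]
      rw [show m + 10 = (m + 2) + 8 from by ring] at *
      rw [h1, h2]

lemma narayana_mod_eight : ∀ q r, narayana (8 * q + r) % 3 = narayana r % 3 := by
  intro q
  induction q with
  | zero => simp
  | succ k ih =>
    intro r
    have : 8 * (k + 1) + r = (8 * k + r) + 8 := by ring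
    rw [this, narayana_mod_three_period, ih]

theorem narayana_not_div_three (n : ℕ) (hn : 1 ≤ n)
    (h : n % 8 = 1 ∨ n % 8 = 2 ∨ n % 8 = 3 ∨ n % 8 = 4 ∨ n % 8 = 6) :
    ¬ (3 ∣ narayana n) := by
  have hd : n = 8 * (n / 8) + n % 8 := by omega
  rw [Nat.dvd_iff_mod_eq_zero]
  rw [hd, narayana_mod_eight]
  rcases h with h | h | h | h | h <;> rw [h] <;> norm_num [narayana]
end

section
/- If n ≥ 1 and n ≡ 21 (mod 24), then ν_3(a_n) = ν_3(n+3) + 1, where ν_3 denotes the 3-adic valuation. -/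
namespace NarayanaVal

open Matrix

abbrev Mat := Matrix (Fin 3) (Fin 3) ℤ

def Mmat : Mat := !![1,0,1;1,0,0;0,1,0]

def Amat : Mat := !![655,305,447;447,208,305;305,142,208]

lemma M24 : Mmat ^ 24 = 1 + (3^2 : ℤ) • Amat := by
  have h3 : Mmat ^ 3 = !![2,1,1;1,1,1;1,0,1] := by
    rw [pow_succ, pow_succ, pow_one]
    simp [Mmat, Matrix.mul_fin_three]
  have h6 : Mmat ^ 6 = !![6,3,4;4,2,3;3,1,2] := by
    rw [show (6:ℕ) = 3*2 from rfl, pow_mul, h3, pow_two]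
    simp [Matrix.mul_fin_three]
  have h12 : Mmat ^ 12 = !![60,28,41;41,19,28;28,13,19] := by
    rw [show (12:ℕ) = 6*2 from rfl, pow_mul, h6, pow_two]
    simp [Matrix.mul_fin_three]
  have h24 : Mmat ^ 24 = !![5896,2745,4023;4023,1873,2745;2745,1278,1873] := by
    rw [show (24:ℕ) = 12*2 from rfl, pow_mul, h12, pow_two]
    simp [Matrix.mul_fin_three]
  rw [h24, Amat]
  ext i j
  fin_cases i <;> fin_cases j <;> simp

lemma cube (c : ℤ) (B : Mat) :
    (1 + c • B)^3 = 1 + (3*c) • B + (3*c^2) • (B*B) + (c^3) • (B*(B*B)) := by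
  rw [pow_succ, pow_succ, pow_one]
  simp only [mul_add, add_mul, one_mul, mul_one, smul_mul_assoc, mul_smul_comm,
    smul_smul, smul_add, mul_assoc]
  module

lemma stepv : ∀ v : ℕ, ∃ B C : Mat,
    Mmat ^ (24 * 3^v) = 1 + ((3:ℤ)^(v+2)) • B ∧ B = Amat + (3:ℤ) • C := by
  intro v
  induction v with
  | zero => exact ⟨Amat, 0, by simpa using M24, by simp⟩
  | succ v ih =>
      obtain ⟨B, C, hB, hBC⟩ := ih
      refine ⟨B + ((3:ℤ)^(v+2)) • (B*B) + ((3:ℤ)^(2*v+3)) • (B*(B*B)),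
        C + ((3:ℤ)^(v+1)) • (B*B) + ((3:ℤ)^(2*v+2)) • (B*(B*B)), ?_, ?_⟩
      · have he : 24 * 3^(v+1) = (24 * 3^v) * 3 := by ring
        rw [he, pow_mul, hB, cube]
        simp only [smul_add, smul_smul]
        module
      · rw [hBC]
        simp only [smul_add, smul_smul]
        module

lemma powu (c : ℤ) (B : Mat) : ∀ u : ℕ, ∃ Z : Mat,
    (1 + c • B)^u = 1 + (c*u) • B + (c^2) • Z := by
  intro u
  induction u with
  | zero => exact ⟨0, by simp⟩
  | succ u ih =>
      obtain ⟨Z, hZ⟩ := ih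
      refine ⟨Z + (u:ℤ) • (B*B) + c • (Z * B), ?_⟩
      rw [pow_succ, hZ]
      simp only [mul_add, add_mul, one_mul, mul_one, smul_mul_assoc, mul_smul_comm,
        smul_smul, smul_add, mul_assoc]
      push_cast
      module

lemma Mpow_mulVec (n : ℕ) :
    (Mmat ^ n).mulVec ![1,1,0] =
      ![(narayana (n+2) : ℤ), narayana (n+1), narayana n] := by
  induction n with
  | zero => funext i; fin_cases i <;> simp [narayana]
  | succ k ih =>
      rw [pow_succ', ← Matrix.mulVec_mulVec, ih]
      funext i
      have hrec : narayana (k+3) = narayana (k+2) + narayana k := rfl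
      fin_cases i <;>
        simp [Mmat, Matrix.mulVec, dotProduct, Fin.sum_univ_succ, hrec]

lemma key (n : ℕ) : ((Mmat ^ (n+3)).mulVec ![0,1,0]) 2 = (narayana n : ℤ) := by
  have h : Mmat ^ (n+3) = Mmat ^ n * Mmat ^ 3 := by rw [← pow_add]
  have h3 : (Mmat ^ 3).mulVec ![0,1,0] = ![1,1,0] := by
    rw [pow_succ, pow_succ, pow_one]
    funext i; fin_cases i <;>
      simp [Mmat, Matrix.mul_fin_three, Matrix.mulVec, dotProduct, Fin.sum_univ_succ]
  rw [h, ← Matrix.mulVec_mulVec, h3, Mpow_mulVec]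
  simp

end NarayanaVal

theorem narayana_val_21 (n : ℕ) (hn : 1 ≤ n) (h : n % 24 = 21) :
    padicValNat 3 (narayana n) = padicValNat 3 (n + 3) + 1 := by
  haveI hp3 : Fact (Nat.Prime 3) := ⟨by norm_num⟩
  obtain ⟨N, hN⟩ : ∃ N, n + 3 = 24 * N := ⟨n / 24 + 1, by omega⟩
  have hN0 : N ≠ 0 := by omega
  set v := padicValNat 3 N with hv
  set u := N / 3 ^ v with hu
  have hvu : 3 ^ v * u = N := Nat.ordProj_mul_ordCompl_eq_self N 3
  have hu3 : ¬ (3 ∣ u) := Nat.not_dvd_ordCompl (by norm_num) hN0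
  obtain ⟨B, C, hB, hBC⟩ := NarayanaVal.stepv v
  obtain ⟨Z, hZ⟩ := NarayanaVal.powu ((3:ℤ)^(v+2)) B u
  have hpow : NarayanaVal.Mmat ^ (n+3) =
      1 + ((3:ℤ)^(v+2) * u) • B + (((3:ℤ)^(v+2))^2) • Z := by
    rw [hN, ← hvu, show 24 * (3^v * u) = (24*3^v)*u from by ring, pow_mul, hB, hZ]
  have hcomp : (narayana n : ℤ) =
      (3:ℤ)^(v+2) * u * (B 2 1) + ((3:ℤ)^(v+2))^2 * (Z 2 1) := by
    rw [← NarayanaVal.key n, hpow]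
    rw [Matrix.add_mulVec, Matrix.add_mulVec, Matrix.one_mulVec,
      Matrix.smul_mulVec, Matrix.smul_mulVec]
    simp only [Pi.add_apply, Pi.smul_apply, smul_eq_mul, Matrix.mulVec,
      dotProduct, Fin.sum_univ_three]
    norm_num
    simp
  set r : ℤ := (u : ℤ) * B 2 1 + (3:ℤ)^(v+2) * Z 2 1 with hrdef
  have hr : (narayana n : ℤ) = 3^(v+2) * r := by rw [hcomp, hrdef]; ring
  have hB21 : B 2 1 = 142 + 3 * C 2 1 := by
    rw [hBC]
    simp only [Matrix.add_apply, Pi.smul_apply, smul_eq_mul]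
    norm_num [NarayanaVal.Amat]
    rfl
  have hrlin : r = 142 * (u:ℤ) + 3 * ((u:ℤ) * C 2 1 + 3^(v+1) * Z 2 1) := by
    rw [hrdef, hB21]; ring
  have hu3' : ¬ ((3:ℤ) ∣ (u:ℤ)) := fun hh => hu3 (by exact_mod_cast hh)
  have hrne : ¬ ((3:ℤ) ∣ r) := by
    intro hd
    set t : ℤ := (u:ℤ) * C 2 1 + 3^(v+1) * Z 2 1 with ht
    omega
  have hrne0 : r ≠ 0 := fun h0 => hrne (h0 ▸ dvd_zero 3)
  have hnat : narayana n = 3^(v+2) * r.natAbs := by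
    have h1 := congrArg Int.natAbs hr
    simpa [Int.natAbs_mul, Int.natAbs_pow] using h1
  have hnd : ¬ 3 ∣ r.natAbs := by
    intro hd
    exact hrne (Int.natAbs_dvd_natAbs.mp (by simpa using hd))
  have hnd0 : r.natAbs ≠ 0 := fun h0 => hnd (h0 ▸ dvd_zero 3)
  have hval : padicValNat 3 (narayana n) = v + 2 := by
    rw [hnat, padicValNat.mul (pow_ne_zero _ (by norm_num)) hnd0,
      padicValNat.prime_pow, padicValNat.eq_zero_of_not_dvd hnd, add_zero]
  have hval2 : padicValNat 3 (n + 3) = 1 + v := by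
    rw [hN, padicValNat.mul (by norm_num) hN0,
      show (24:ℕ) = 3 * 8 from rfl, padicValNat.mul (by norm_num) (by norm_num),
      padicValNat.self (by norm_num), padicValNat.eq_zero_of_not_dvd (by norm_num), ← hv]
  rw [hval, hval2]
  omega
end

section
/- If n ≥ 1 and n ≡ 16 (mod 24), then ν_3(a_n) = ν_3(n+8) + 2, where ν_3 denotes the 3-adic valuation. -/
namespace NarayanaVal16

open Matrix Finset

def Mm : Matrix (Fin 3) (Fin 3) ℤ := !![1,0,1;1,0,0;0,1,0]
def Pm : Matrix (Fin 3) (Fin 3) ℤ := !![-2,3,0;0,-2,3;3,-3,-2]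
def Bm : Matrix (Fin 3) (Fin 3) ℤ := !![655,305,447;447,208,305;305,142,208]

def F : Matrix (Fin 3) (Fin 3) ℤ →+ ℤ :=
  AddMonoidHom.mk' (fun N => N 2 0 + N 2 1) (by intro x y; simp [Matrix.add_apply]; ring)

lemma F_zsmul (c : ℤ) (X : Matrix (Fin 3) (Fin 3) ℤ) : F (c • X) = c * F X := by
  simp only [F, AddMonoidHom.mk'_apply, Matrix.smul_apply, smul_eq_mul]; ring

lemma hM2 : Mm ^ 2 = !![1,1,1;1,0,1;1,0,0] := by
  rw [sq]; norm_num [Mm, Matrix.mul_fin_three]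

lemma hM3 : Mm ^ 3 = Mm ^ 2 + 1 := by
  have h1 : Mm ^ 3 = !![2,1,1;1,1,1;1,0,1] := by
    rw [pow_succ, hM2, Mm]
    norm_num [Matrix.mul_fin_three]
  rw [h1, hM2]
  ext i j; fin_cases i <;> fin_cases j <;> simp [Matrix.vecHead, Matrix.vecTail]

lemma hM8 : Mm ^ 8 = !![13,6,9;9,4,6;6,3,4] := by
  have h4 : Mm ^ 4 = !![3,1,2;2,1,1;1,1,1] := by
    rw [show (4:ℕ) = 2+2 from rfl, pow_add, hM2]
    norm_num [Matrix.mul_fin_three]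
  rw [show (8:ℕ) = 4+4 from rfl, pow_add, h4]
  norm_num [Matrix.mul_fin_three]

lemma hM24 : Mm ^ 24 = 1 + (9:ℤ) • Bm := by
  have h16 : Mm ^ 16 = !![277,129,189;189,88,129;129,60,88] := by
    rw [show (16:ℕ) = 8+8 from rfl, pow_add, hM8]
    norm_num [Matrix.mul_fin_three]
  have h24 : Mm ^ 24 = !![5896,2745,4023;4023,1873,2745;2745,1278,1873] := by
    rw [show (24:ℕ) = 16+8 from rfl, pow_add, h16, hM8]
    norm_num [Matrix.mul_fin_three]
  rw [h24, Bm]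
  ext i j; fin_cases i <;> fin_cases j <;> simp [Matrix.vecHead, Matrix.vecTail]

lemma hMP : Mm ^ 8 * Pm = 1 := by
  rw [hM8, Pm]
  norm_num [Matrix.mul_fin_three]
  exact (Matrix.one_fin_three).symm

lemma FP : F Pm = 0 := by simp [F, Pm]

lemma FBP : F (Bm * Pm) = 21 := by
  norm_num [Bm, Pm, Matrix.mul_fin_three]
  simp [F]

lemma F_pow : ∀ n : ℕ, F (Mm ^ n) = (narayana n : ℤ) := by
  intro n
  induction n using Nat.strong_induction_on with
  | _ n ih =>
    match n with
    | 0 => simp [narayana, F, Matrix.one_apply, Matrix.vecHead, Matrix.vecTail]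
    | 1 => simp [narayana, F, Mm, Matrix.vecHead, Matrix.vecTail]
    | 2 => rw [hM2]; simp [narayana, F, Matrix.vecHead, Matrix.vecTail]
    | (k+3) =>
      have h3 : Mm ^ (k+3) = Mm ^ (k+2) + Mm ^ k := by
        have h : Mm ^ (k+3) = Mm ^ k * Mm ^ 3 := by rw [← pow_add]
        rw [h, hM3, mul_add, mul_one, ← pow_add]
      rw [h3, map_add, ih (k+2) (by omega), ih k (by omega),
        show narayana (k+3) = narayana (k+2) + narayana k from rfl]
      push_cast; ring

lemma expand (s : ℕ) :
    F (Mm ^ (24 * s) * Pm) =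
      ∑ k ∈ Finset.range (s + 1), (s.choose k : ℤ) * 9 ^ k * F (Bm ^ k * Pm) := by
  rw [pow_mul, hM24, add_comm (1 : Matrix (Fin 3) (Fin 3) ℤ),
    Commute.add_pow (Commute.one_right _), Finset.sum_mul, map_sum]
  refine Finset.sum_congr rfl fun k _ => ?_
  rw [one_pow, mul_one, smul_pow, smul_mul_assoc, smul_mul_assoc, F_zsmul,
    ← (Nat.cast_commute (s.choose k) (Bm ^ k)).eq, mul_assoc, ← nsmul_eq_mul,
    map_nsmul, nsmul_eq_mul]
  ring

lemma nar_pos : ∀ n : ℕ, 1 ≤ n → 0 < narayana n := by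
  intro n
  induction n using Nat.strong_induction_on with
  | _ n ih =>
    match n with
    | 0 => omega
    | 1 => intro _; norm_num [narayana]
    | 2 => intro _; norm_num [narayana]
    | (k+3) =>
      intro _
      have := ih (k+2) (by omega) (by omega)
      show 0 < narayana (k+2) + narayana k
      omega

lemma val_decomp (p m : ℕ) [Fact p.Prime] (hm : m ≠ 0) :
    ∃ m', m = p ^ padicValNat p m * m' ∧ ¬ p ∣ m' := by
  obtain ⟨m', hm'⟩ := pow_padicValNat_dvd (p := p) (n := m)
  refine ⟨m', hm', fun hd => pow_succ_padicValNat_not_dvd (p := p) hm ?_⟩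
  rw [pow_succ]
  calc p ^ padicValNat p m * p ∣ p ^ padicValNat p m * m' := Nat.mul_dvd_mul_left _ hd
    _ = m := hm'.symm

lemma choose_dvd (s j e : ℕ) (hs : 0 < s) (he : 3 ^ e ∣ s) (hj : 2 ≤ j) :
    3 ^ (e + 4) ∣ s.choose j * 9 ^ j := by
  by_cases hjs : s < j
  · simp [Nat.choose_eq_zero_of_lt hjs]
  push_neg at hjs
  haveI : Fact (Nat.Prime 3) := ⟨by norm_num⟩
  obtain ⟨j', hj', h3j'⟩ := val_decomp 3 j (by omega)
  set v := padicValNat 3 j with hv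
  have hkey : 3 ^ e ∣ s.choose j * j := by
    have h := Nat.add_one_mul_choose_eq (s-1) (j-1)
    simp only [Nat.succ_eq_add_one, show s - 1 + 1 = s by omega,
      show j - 1 + 1 = j by omega] at h
    calc 3 ^ e ∣ s * Nat.choose (s-1) (j-1) := he.mul_right _
      _ = s.choose j * j := h
  have hvlt : v < 3 ^ v := Nat.lt_pow_self (by norm_num)
  have hvle : 3 ^ v ≤ j := Nat.le_of_dvd (by omega) ⟨j', hj'⟩
  have hvb : v + 4 ≤ 2 * j := by
    match v, hvlt, hvle with
    | 0, _, _ => omega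
    | 1, _, h => norm_num at h; omega
    | (w+2), h1, h2 => omega
  have h9j : (9:ℕ) ^ j = 3 ^ (2 * j) := by
    rw [show (9:ℕ) = 3 ^ 2 from rfl, ← pow_mul]
  by_cases hev : v ≤ e
  · have h1 : 3 ^ (e - v) ∣ s.choose j := by
      have h2 : 3 ^ (e - v) * 3 ^ v ∣ (s.choose j * j') * 3 ^ v := by
        rw [← pow_add, show e - v + v = e by omega]
        calc 3 ^ e ∣ s.choose j * j := hkey
          _ = s.choose j * j' * 3 ^ v := by rw [hj']; ring
      have h3 : 3 ^ (e - v) ∣ s.choose j * j' :=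
        (Nat.mul_dvd_mul_iff_right (pow_pos (by norm_num : (0:ℕ) < 3) v)).mp h2
      exact (Nat.Coprime.pow_left _
        ((Nat.Prime.coprime_iff_not_dvd (by norm_num)).mpr h3j')).dvd_of_dvd_mul_right h3
    calc 3 ^ (e + 4) = 3 ^ (e - v) * 3 ^ (v + 4) := by
          rw [← pow_add]; congr 1; omega
      _ ∣ s.choose j * 9 ^ j := by
          rw [h9j]
          exact Nat.mul_dvd_mul h1 (pow_dvd_pow 3 hvb)
  · have : (3:ℕ) ^ (e + 4) ∣ 9 ^ j := by
      rw [h9j]; exact pow_dvd_pow 3 (by omega)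
    exact Dvd.dvd.mul_left this _

end NarayanaVal16

theorem narayana_val_16 (n : ℕ) (hn : 1 ≤ n) (h : n % 24 = 16) :
    padicValNat 3 (narayana n) = padicValNat 3 (n + 8) + 2 := by
  open NarayanaVal16 in
  haveI : Fact (Nat.Prime 3) := ⟨by norm_num⟩
  obtain ⟨q, rfl⟩ : ∃ q, n = 24 * q + 16 := ⟨n / 24, by omega⟩
  set s := q + 1 with hsdef
  set e := padicValNat 3 s with he
  obtain ⟨s', hs', h3s'⟩ := NarayanaVal16.val_decomp 3 s (by omega)
  rw [← he] at hs'
  have hs'0 : s' ≠ 0 := by rintro rfl; rw [mul_zero] at hs'; omega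
  -- integer representation
  have hrep : (narayana (24 * q + 16) : ℤ) = F (Mm ^ (24 * s) * Pm) := by
    have h1 : Mm ^ (24 * s) * Pm = Mm ^ (24 * q + 16) := by
      rw [show 24 * s = (24 * q + 16) + 8 by omega, pow_add, mul_assoc, hMP, mul_one]
    rw [h1, F_pow]
  rw [expand s] at hrep
  rw [show s + 1 = q + 2 by omega, Finset.sum_range_succ', Finset.sum_range_succ'] at hrep
  -- identify terms
  have hg0 : (s.choose 0 : ℤ) * 9 ^ 0 * F (Bm ^ 0 * Pm) = 0 := by
    simp [FP]
  have hg1 : (s.choose (0 + 1) : ℤ) * 9 ^ (0 + 1) * F (Bm ^ (0 + 1) * Pm) = (s : ℤ) * 9 * 21 := by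
    simp [FBP]
  rw [hg0, hg1, add_zero] at hrep
  set R : ℤ := ∑ k ∈ Finset.range q,
    (s.choose (k + 1 + 1) : ℤ) * 9 ^ (k + 1 + 1) * F (Bm ^ (k + 1 + 1) * Pm) with hR
  have hRd : (3:ℤ) ^ (e + 4) ∣ R := by
    refine Finset.dvd_sum fun k _ => ?_
    have hnat : (3:ℕ) ^ (e + 4) ∣ s.choose (k + 2) * 9 ^ (k + 2) :=
      choose_dvd s (k + 2) e (by omega) ⟨s', hs'⟩ (by omega)
    have hint : ((3:ℤ) ^ (e + 4)) ∣ ((s.choose (k + 2) * 9 ^ (k + 2) : ℕ) : ℤ) := by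
      exact_mod_cast Int.natCast_dvd_natCast.mpr hnat
    push_cast at hint
    exact hint.mul_right _
  obtain ⟨r, hr⟩ := hRd
  have hfactZ : (narayana (24 * q + 16) : ℤ) = 3 ^ (e + 3) * (7 * (s' : ℤ) + 3 * r) := by
    rw [hrep, hr, hs']
    push_cast
    ring
  have hpos : 0 < narayana (24 * q + 16) := nar_pos _ (by omega)
  have hWpos : 0 < 7 * (s' : ℤ) + 3 * r := by
    rcases le_or_gt (7 * (s' : ℤ) + 3 * r) 0 with hW | hW
    · exfalso
      have h3p : (0:ℤ) < 3 ^ (e + 3) := by positivity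
      have : (0:ℤ) < (narayana (24 * q + 16) : ℤ) := by exact_mod_cast hpos
      nlinarith
    · exact hW
  set W : ℤ := 7 * (s' : ℤ) + 3 * r with hWdef
  have hw : narayana (24 * q + 16) = 3 ^ (e + 3) * W.toNat := by
    have : ((3 ^ (e + 3) * W.toNat : ℕ) : ℤ) = (narayana (24 * q + 16) : ℤ) := by
      push_cast [Int.toNat_of_nonneg hWpos.le]
      rw [hfactZ]
    exact_mod_cast this.symm
  have h3W : ¬ 3 ∣ W.toNat := by
    intro hd
    have hdZ : (3:ℤ) ∣ W := by
      have := Int.natCast_dvd_natCast.mpr hd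
      rwa [Int.toNat_of_nonneg hWpos.le] at this
    have h7 : (3:ℤ) ∣ 7 * (s' : ℤ) := by
      have : (3:ℤ) ∣ W - 3 * r := hdZ.sub ⟨r, rfl⟩
      simpa [hWdef] using this
    have hs3 : (3:ℤ) ∣ (s' : ℤ) :=
      (Int.Prime.dvd_mul' (by norm_num) h7).resolve_left (by norm_num)
    exact h3s' (by exact_mod_cast hs3)
  have hW0 : W.toNat ≠ 0 := by
    intro h0
    rw [h0, mul_zero] at hw
    omega
  have hL : padicValNat 3 (narayana (24 * q + 16)) = e + 3 := by
    rw [hw, padicValNat.mul (by positivity) hW0, padicValNat.prime_pow,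
      padicValNat.eq_zero_of_not_dvd h3W]
  have hRHS : padicValNat 3 (24 * q + 16 + 8) = 1 + e := by
    rw [show 24 * q + 16 + 8 = 3 * (8 * s) by omega,
      padicValNat.mul (by norm_num) (by omega),
      padicValNat.mul (by norm_num) (by omega),
      padicValNat.self (by norm_num),
      padicValNat.eq_zero_of_not_dvd (by norm_num : ¬ 3 ∣ 8)]
    omega
  omega
end

section
/- For every n ≥ 1, the 3-adic valuation of a_n satisfies ν_3(a_n) ≤ ν_3(n(n+1)(n+3)(n+8)) + 6. -/
namespace NarAux
open Matrix

def Mz : Matrix (Fin 3) (Fin 3) ℤ := !![0,1,0; 0,0,1; 1,0,1]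
def Az : Matrix (Fin 3) (Fin 3) ℤ := !![1,1,2; 2,1,3; 3,2,4]
def Bz : Matrix (Fin 3) (Fin 3) ℤ := !![69,47,101; 101,69,148; 148,101,217]
def vz : Fin 3 → ℤ := ![0,1,1]

lemma rec' (m : ℕ) : (narayana (m+3) : ℤ) = narayana (m+2) + narayana m := by
  rw [show narayana (m+3) = narayana (m+2) + narayana m from rfl]; push_cast; ring

lemma stepM (x y z : ℤ) : Mz *ᵥ ![x,y,z] = ![y, z, x+z] := by
  funext i; fin_cases i <;>
    simp [Mz, Matrix.mulVec, dotProduct, Fin.sum_univ_three]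

lemma vec (n : ℕ) : (Mz^n) *ᵥ vz =
    ![(narayana n : ℤ), (narayana (n+1) : ℤ), (narayana (n+2) : ℤ)] := by
  induction n with
  | zero => simp [vz]; exact ⟨rfl, rfl, rfl⟩
  | succ n ih =>
    rw [pow_succ', ← Matrix.mulVec_mulVec, ih, stepM]
    funext i
    fin_cases i <;> simp
    rw [show n+1+2 = n+3 from rfl, rec']; ring

lemma hM2 : Mz * Mz = !![0,0,1; 1,0,1; 1,1,1] := by
  ext i j; fin_cases i <;> fin_cases j <;>
    simp [Mz, Matrix.mul_apply, Fin.sum_univ_three, Matrix.vecHead, Matrix.vecTail]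

lemma hM4 : (!![0,0,1; 1,0,1; 1,1,1] : Matrix (Fin 3) (Fin 3) ℤ) * !![0,0,1; 1,0,1; 1,1,1]
    = !![1,1,1; 1,1,2; 2,1,3] := by
  ext i j; fin_cases i <;> fin_cases j <;>
    simp [Matrix.mul_apply, Fin.sum_univ_three, Matrix.vecHead, Matrix.vecTail]

lemma hM8 : Mz ^ 8 = 1 + (3:ℤ) • Az := by
  have h8 : Mz ^ 8 = ((Mz*Mz)*(Mz*Mz))*((Mz*Mz)*(Mz*Mz)) := by
    rw [show (8:ℕ) = 2*2*2 from rfl, pow_mul, pow_mul, pow_two, pow_two, pow_two]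
  rw [h8, hM2, hM4]
  ext i j; fin_cases i <;> fin_cases j <;>
    simp [Az, Matrix.mul_apply, Fin.sum_univ_three, Matrix.one_apply,
      Matrix.vecHead, Matrix.vecTail] <;> norm_num

lemma hBz : Bz = Az * Az + Az * (Az * Az) := by
  ext i j; fin_cases i <;> fin_cases j <;>
    simp [Az, Bz, Matrix.mul_apply, Fin.sum_univ_three, Matrix.vecHead, Matrix.vecTail] <;>
    norm_num

lemma hAv : Az *ᵥ vz = ![3,4,6] := by
  funext i; fin_cases i <;>
    simp [Az, vz, Matrix.mulVec, dotProduct, Fin.sum_univ_three,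
      Matrix.vecHead, Matrix.vecTail]

lemma hBv : Bz *ᵥ vz = ![148,217,318] := by
  funext i; fin_cases i <;>
    simp [Bz, vz, Matrix.mulVec, dotProduct, Fin.sum_univ_three,
      Matrix.vecHead, Matrix.vecTail]

lemma tier1one : ∀ j : ℕ, ∃ C, Mz^(8*3^j) = 1 + ((3:ℤ)^(j+1)) • Az + ((3:ℤ)^(j+2)) • C := by
  intro j
  induction j with
  | zero => exact ⟨0, by simpa using hM8⟩
  | succ j ih =>
    obtain ⟨C, hC⟩ := ih
    have hpow : Mz^(8*3^(j+1)) = (Mz^(8*3^j))^3 := by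
      rw [show 8*3^(j+1) = 8*3^j*3 by ring, pow_mul]
    refine ⟨C + ((3:ℤ)^j) • ((Az + (3:ℤ)•C) * (Az + (3:ℤ)•C))
        + ((3:ℤ)^(2*j)) • ((Az + (3:ℤ)•C) * ((Az + (3:ℤ)•C) * (Az + (3:ℤ)•C))), ?_⟩
    rw [hpow, hC, pow_succ, pow_two]
    simp only [mul_add, add_mul, one_mul, mul_one, smul_mul_assoc, mul_smul_comm, smul_smul,
      smul_add, mul_assoc, add_assoc]
    match_scalars <;> ring

lemma tier1 : ∀ j t : ℕ, ∃ C, Mz^(8*3^j*t)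
    = 1 + ((t:ℤ) * 3^(j+1)) • Az + ((3:ℤ)^(j+2)) • C := by
  intro j t
  obtain ⟨C₂, hC₂⟩ := tier1one j
  induction t with
  | zero => exact ⟨0, by simp⟩
  | succ t ih =>
    obtain ⟨C₁, hC₁⟩ := ih
    have hpow : Mz^(8*3^j*(t+1)) = Mz^(8*3^j*t) * Mz^(8*3^j) := by
      rw [show 8*3^j*(t+1) = 8*3^j*t + 8*3^j by ring, pow_add]
    refine ⟨C₁ + C₂ + ((t:ℤ)*3^j) • (Az*Az) + ((t:ℤ)*3^(j+1)) • (Az*C₂)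
        + ((3:ℤ)^(j+1)) • (C₁*Az) + ((3:ℤ)^(j+2)) • (C₁*C₂), ?_⟩
    rw [hpow, hC₁, hC₂]
    simp only [mul_add, add_mul, one_mul, mul_one, smul_mul_assoc, mul_smul_comm, smul_smul,
      smul_add, mul_assoc, add_assoc]
    push_cast
    match_scalars <;> ring

lemma tier2one : ∀ i : ℕ, ∃ C, Mz^(8*3^(i+1))
    = 1 + ((3:ℤ)^(i+2)) • Az + ((3:ℤ)^(i+3)) • Bz + ((3:ℤ)^(i+4)) • C := by
  intro i
  induction i with
  | zero =>
    refine ⟨0, ?_⟩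
    have hpow : Mz^(8*3^(0+1)) = (Mz^8)^3 := by norm_num [← pow_mul]
    rw [hpow, hM8, hBz, pow_succ, pow_two]
    simp only [mul_add, add_mul, one_mul, mul_one, smul_mul_assoc, mul_smul_comm, smul_smul,
      smul_add, mul_assoc, add_assoc]
    match_scalars <;> ring
  | succ i ih =>
    obtain ⟨C, hC⟩ := ih
    have hpow : Mz^(8*3^(i+1+1)) = (Mz^(8*3^(i+1)))^3 := by
      rw [show 8*3^(i+1+1) = 8*3^(i+1)*3 by ring, pow_mul]
    set E := Az + (3:ℤ)•Bz + (9:ℤ)•C with hE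
    refine ⟨C + ((3:ℤ)^i) • (E * E) + ((3:ℤ)^(2*i+1)) • (E * (E * E)), ?_⟩
    rw [hpow, hC, pow_succ, pow_two, hE]
    simp only [mul_add, add_mul, one_mul, mul_one, smul_mul_assoc, mul_smul_comm, smul_smul,
      smul_add, mul_assoc, add_assoc]
    match_scalars <;> ring

lemma tier2 : ∀ i t : ℕ, ∃ C, Mz^(8*3^(i+1)*t)
    = 1 + ((t:ℤ) * 3^(i+2)) • Az + ((t:ℤ) * 3^(i+3)) • Bz + ((3:ℤ)^(i+4)) • C := by
  intro i t
  obtain ⟨C₂, hC₂⟩ := tier2one i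
  induction t with
  | zero => exact ⟨0, by simp⟩
  | succ t ih =>
    obtain ⟨C₁, hC₁⟩ := ih
    have hpow : Mz^(8*3^(i+1)*(t+1)) = Mz^(8*3^(i+1)*t) * Mz^(8*3^(i+1)) := by
      rw [show 8*3^(i+1)*(t+1) = 8*3^(i+1)*t + 8*3^(i+1) by ring, pow_add]
    refine ⟨C₁ + C₂ + ((t:ℤ)*3^i) • (Az*Az) + ((t:ℤ)*3^(i+1)) • (Az*Bz)
        + ((t:ℤ)*3^(i+2)) • (Az*C₂) + ((t:ℤ)*3^(i+1)) • (Bz*Az)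
        + ((t:ℤ)*3^(i+2)) • (Bz*Bz) + ((t:ℤ)*3^(i+3)) • (Bz*C₂)
        + ((3:ℤ)^(i+2)) • (C₁*Az) + ((3:ℤ)^(i+3)) • (C₁*Bz) + ((3:ℤ)^(i+4)) • (C₁*C₂), ?_⟩
    rw [hpow, hC₁, hC₂]
    simp only [mul_add, add_mul, one_mul, mul_one, smul_mul_assoc, mul_smul_comm, smul_smul,
      smul_add, mul_assoc, add_assoc]
    push_cast
    match_scalars <;> ring



lemma key3 (j t n : ℕ) (h : n + 3 = 8 * 3^j * t) :
    ∃ e : ℤ, (narayana n : ℤ) = 3^(j+1) * (t + 3*e) := by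
  obtain ⟨C, hC⟩ := tier1 j t
  have hv := vec (n+3)
  rw [h, hC, Matrix.add_mulVec, Matrix.add_mulVec, Matrix.one_mulVec,
    Matrix.smul_mulVec, Matrix.smul_mulVec, hAv] at hv
  have h0 := congrFun hv 0
  have h1 := congrFun hv 1
  have h2 := congrFun hv 2
  rw [← h] at h0 h1 h2
  rw [show n+3+1 = n+4 from rfl] at h1
  rw [show n+3+2 = n+5 from rfl] at h2
  simp [vz] at h0 h1 h2
  have hr0 : (narayana (n+3) : ℤ) = narayana (n+2) + narayana n := rec' n
  have hr1 : (narayana (n+4) : ℤ) = narayana (n+3) + narayana (n+1) := rec' (n+1)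
  have hr2 : (narayana (n+5) : ℤ) = narayana (n+4) + narayana (n+2) := rec' (n+2)
  refine ⟨(C *ᵥ ![(0:ℤ),1,1]) 0 + (C *ᵥ ![(0:ℤ),1,1]) 1 - (C *ᵥ ![(0:ℤ),1,1]) 2, ?_⟩
  linear_combination (-1:ℤ)*h0 - h1 + h2 - hr0 + hr2


lemma key1 (j t n : ℕ) (h : n + 1 = 8 * 3^j * t) :
    ∃ e : ℤ, (narayana n : ℤ) = 3^(j+1) * (2*t + 3*e) := by
  obtain ⟨C, hC⟩ := tier1 j t
  have hv := vec (n+1)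
  rw [h, hC, Matrix.add_mulVec, Matrix.add_mulVec, Matrix.one_mulVec,
    Matrix.smul_mulVec, Matrix.smul_mulVec, hAv] at hv
  have h1 := congrFun hv 1
  have h2 := congrFun hv 2
  rw [← h] at h1 h2
  rw [show n+1+1 = n+2 from rfl] at h1
  rw [show n+1+2 = n+3 from rfl] at h2
  simp [vz] at h1 h2
  have hr0 : (narayana (n+3) : ℤ) = narayana (n+2) + narayana n := rec' n
  refine ⟨(C *ᵥ ![(0:ℤ),1,1]) 2 - (C *ᵥ ![(0:ℤ),1,1]) 1, ?_⟩
  linear_combination h1 - h2 - hr0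

lemma key0 (i t n : ℕ) (h : n = 8 * 3^(i+1) * t) :
    ∃ e : ℤ, (narayana n : ℤ) = 3^(i+3) * (149*t + 3*e) := by
  obtain ⟨C, hC⟩ := tier2 i t
  have hv := vec n
  rw [h, hC, Matrix.add_mulVec, Matrix.add_mulVec, Matrix.add_mulVec, Matrix.one_mulVec,
    Matrix.smul_mulVec, Matrix.smul_mulVec, Matrix.smul_mulVec,
    hAv, hBv] at hv
  have h0 := congrFun hv 0
  rw [← h] at h0
  simp [vz] at h0
  refine ⟨(C *ᵥ ![(0:ℤ),1,1]) 0, ?_⟩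
  linear_combination -h0

lemma key8 (i t n : ℕ) (h : n + 8 = 8 * 3^(i+1) * t) :
    ∃ e : ℤ, (narayana n : ℤ) = 3^(i+3) * (7*t + 3*e) := by
  obtain ⟨C, hC⟩ := tier2 i t
  have hv := vec (n+8)
  rw [h, hC, Matrix.add_mulVec, Matrix.add_mulVec, Matrix.add_mulVec, Matrix.one_mulVec,
    Matrix.smul_mulVec, Matrix.smul_mulVec, Matrix.smul_mulVec,
    hAv, hBv] at hv
  have h0 := congrFun hv 0
  have h1 := congrFun hv 1
  have h2 := congrFun hv 2
  rw [← h] at h0 h1 h2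
  rw [show n+8+1 = n+9 from rfl] at h1
  rw [show n+8+2 = n+10 from rfl] at h2
  simp [vz] at h0 h1 h2
  have hx : (narayana n : ℤ)
      = -2*narayana (n+8) - 3*narayana (n+9) + 3*narayana (n+10) := by
    have r0 : (narayana (n+3) : ℤ) = narayana (n+2) + narayana n := rec' n
    have r1 : (narayana (n+4) : ℤ) = narayana (n+3) + narayana (n+1) := rec' (n+1)
    have r2 : (narayana (n+5) : ℤ) = narayana (n+4) + narayana (n+2) := rec' (n+2)
    have r3 : (narayana (n+6) : ℤ) = narayana (n+5) + narayana (n+3) := rec' (n+3)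
    have r4 : (narayana (n+7) : ℤ) = narayana (n+6) + narayana (n+4) := rec' (n+4)
    have r5 : (narayana (n+8) : ℤ) = narayana (n+7) + narayana (n+5) := rec' (n+5)
    have r6 : (narayana (n+9) : ℤ) = narayana (n+8) + narayana (n+6) := rec' (n+6)
    have r7 : (narayana (n+10) : ℤ) = narayana (n+9) + narayana (n+7) := rec' (n+7)
    linarith
  refine ⟨-2*(C *ᵥ ![(0:ℤ),1,1]) 0 - 3*(C *ᵥ ![(0:ℤ),1,1]) 1 + 3*(C *ᵥ ![(0:ℤ),1,1]) 2, ?_⟩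
  linear_combination hx + 2*h0 + 3*h1 - 3*h2

lemma keybase (s n : ℕ) (h : n = 24*s + 8) :
    ∃ e : ℤ, (narayana n : ℤ) = 9 + 540*(s:ℤ) + 85077*(s:ℤ) + 81*e := by
  obtain ⟨C, hC⟩ := tier2 0 s
  have hv := vec n
  have hu : (Mz^8) *ᵥ vz = ![(9:ℤ),13,19] := by
    rw [vec 8]
    norm_num [show narayana 8 = 9 by decide, show narayana 9 = 13 by decide,
      show narayana 10 = 19 by decide]
  rw [show n = 8*3^(0+1)*s + 8 by rw [h]; ring, pow_add, hC, ← Matrix.mulVec_mulVec, hu] at hv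
  rw [Matrix.add_mulVec, Matrix.add_mulVec, Matrix.add_mulVec, Matrix.one_mulVec,
    Matrix.smul_mulVec, Matrix.smul_mulVec, Matrix.smul_mulVec] at hv
  have h0 := congrFun hv 0
  rw [show 8*3^(0+1)*s + 8 = n by rw [h]; ring] at h0
  simp [Az, Bz, Matrix.mulVec, dotProduct, Fin.sum_univ_three,
    Matrix.vecHead, Matrix.vecTail] at h0
  refine ⟨C 0 0 * 9 + C 0 1 * 13 + C 0 2 * 19, ?_⟩
  linear_combination -h0

lemma keycov (t r n : ℕ) (h : n = 8*t + r) :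
    ∃ e : ℤ, (narayana n : ℤ) = narayana r
      + 3*(t:ℤ)*((narayana r : ℤ) + narayana (r+1) + 2*narayana (r+2)) + 9*e := by
  obtain ⟨C, hC⟩ := tier1 0 t
  have hv := vec n
  rw [show n = 8*3^0*t + r by rw [h]; ring, pow_add, hC, ← Matrix.mulVec_mulVec, vec r] at hv
  rw [Matrix.add_mulVec, Matrix.add_mulVec, Matrix.one_mulVec,
    Matrix.smul_mulVec, Matrix.smul_mulVec] at hv
  have h0 := congrFun hv 0
  rw [show 8*3^0*t + r = n by rw [h]; ring] at h0
  simp [Az, Matrix.mulVec, dotProduct, Fin.sum_univ_three,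
    Matrix.vecHead, Matrix.vecTail] at h0
  exact ⟨C 0 0 * narayana r + C 0 1 * narayana (r+1) + C 0 2 * narayana (r+2),
    by linear_combination -h0⟩


lemma not_dvd3 (j t n : ℕ) (ht : ¬ 3 ∣ t) (h : n + 3 = 8 * 3^j * t) :
    ¬ 3^(j+2) ∣ narayana n := by
  intro hd
  obtain ⟨e, he⟩ := key3 j t n h
  obtain ⟨d, hdd⟩ : (3:ℤ)^(j+2) ∣ (narayana n : ℤ) := by exact_mod_cast hd
  rw [he] at hdd
  have hc : (t:ℤ) + 3*e = 3*d := by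
    have h31 : ((3:ℤ)^(j+1)) ≠ 0 := by positivity
    apply mul_left_cancel₀ h31
    linear_combination hdd
  exact ht (by omega)

lemma not_dvd1 (j t n : ℕ) (ht : ¬ 3 ∣ t) (h : n + 1 = 8 * 3^j * t) :
    ¬ 3^(j+2) ∣ narayana n := by
  intro hd
  obtain ⟨e, he⟩ := key1 j t n h
  obtain ⟨d, hdd⟩ : (3:ℤ)^(j+2) ∣ (narayana n : ℤ) := by exact_mod_cast hd
  rw [he] at hdd
  have hc : 2*(t:ℤ) + 3*e = 3*d := by
    have h31 : ((3:ℤ)^(j+1)) ≠ 0 := by positivity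
    apply mul_left_cancel₀ h31
    linear_combination hdd
  exact ht (by omega)

lemma not_dvd0 (i t n : ℕ) (ht : ¬ 3 ∣ t) (h : n = 8 * 3^(i+1) * t) :
    ¬ 3^(i+4) ∣ narayana n := by
  intro hd
  obtain ⟨e, he⟩ := key0 i t n h
  obtain ⟨d, hdd⟩ : (3:ℤ)^(i+4) ∣ (narayana n : ℤ) := by exact_mod_cast hd
  rw [he] at hdd
  have hc : 149*(t:ℤ) + 3*e = 3*d := by
    have h31 : ((3:ℤ)^(i+3)) ≠ 0 := by positivity
    apply mul_left_cancel₀ h31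
    linear_combination hdd
  exact ht (by omega)

lemma not_dvd8 (i t n : ℕ) (ht : ¬ 3 ∣ t) (h : n + 8 = 8 * 3^(i+1) * t) :
    ¬ 3^(i+4) ∣ narayana n := by
  intro hd
  obtain ⟨e, he⟩ := key8 i t n h
  obtain ⟨d, hdd⟩ : (3:ℤ)^(i+4) ∣ (narayana n : ℤ) := by exact_mod_cast hd
  rw [he] at hdd
  have hc : 7*(t:ℤ) + 3*e = 3*d := by
    have h31 : ((3:ℤ)^(i+3)) ≠ 0 := by positivity
    apply mul_left_cancel₀ h31
    linear_combination hdd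
  exact ht (by omega)

lemma not_dvdb (s n : ℕ) (h : n = 24*s + 8) : ¬ 27 ∣ narayana n := by
  intro hd
  obtain ⟨e, he⟩ := keybase s n h
  obtain ⟨d, hdd⟩ : (27:ℤ) ∣ (narayana n : ℤ) := by exact_mod_cast hd
  rw [he] at hdd
  omega

lemma not_dvdcov (t r n : ℕ) (h : n = 8*t + r)
    (hr : r = 1 ∨ r = 2 ∨ r = 3 ∨ r = 4 ∨ r = 6) : ¬ 3 ∣ narayana n := by
  intro hd
  obtain ⟨e, he⟩ := keycov t r n h
  obtain ⟨d, hdd⟩ : (3:ℤ) ∣ (narayana n : ℤ) := by exact_mod_cast hd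
  rcases hr with rfl | rfl | rfl | rfl | rfl
  · rw [show narayana 1 = 1 by decide, show narayana 2 = 1 by decide,
      show narayana 3 = 1 by decide] at he
    push_cast at he; omega
  · rw [show narayana 2 = 1 by decide, show narayana 3 = 1 by decide,
      show narayana 4 = 2 by decide] at he
    push_cast at he; omega
  · rw [show narayana 3 = 1 by decide, show narayana 4 = 2 by decide,
      show narayana 5 = 3 by decide] at he
    push_cast at he; omega
  · rw [show narayana 4 = 2 by decide, show narayana 5 = 3 by decide,
      show narayana 6 = 4 by decide] at he
    push_cast at he; omega
  · rw [show narayana 6 = 4 by decide, show narayana 7 = 6 by decide,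
      show narayana 8 = 9 by decide] at he
    push_cast at he; omega

lemma val_le {m k : ℕ} (h : ¬ 3^(k+1) ∣ m) : padicValNat 3 m ≤ k := by
  by_contra hc
  push_neg at hc
  exact h (dvd_trans (pow_dvd_pow 3 hc) pow_padicValNat_dvd)

lemma extract (N : ℕ) (hN8 : 8 ∣ N) (hN0 : N ≠ 0) :
    ∃ t, ¬ 3 ∣ t ∧ N = 8 * 3^(padicValNat 3 N) * t := by
  haveI : Fact (Nat.Prime 3) := ⟨by norm_num⟩
  set j := padicValNat 3 N with hj
  obtain ⟨m, hm⟩ := pow_padicValNat_dvd (p := 3) (n := N)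
  have hm3 : ¬ 3 ∣ m := by
    intro hc
    obtain ⟨u, hu⟩ := hc
    refine pow_succ_padicValNat_not_dvd (p := 3) hN0 ⟨u, ?_⟩
    conv_lhs => rw [hm, hu]
    ring
  have h8m : 8 ∣ m := by
    have hc : Nat.Coprime 8 (3^j) := Nat.Coprime.pow_right _ (by decide)
    refine hc.dvd_of_dvd_mul_left ?_
    rw [← hm]; exact hN8
  obtain ⟨t, ht⟩ := h8m
  refine ⟨t, fun hc => hm3 (by rw [ht]; exact hc.mul_left 8), by rw [hm, ht]; ring⟩

end NarAux

theorem narayana_val_bound (n : ℕ) (hn : 1 ≤ n) :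
    padicValNat 3 (narayana n) ≤ padicValNat 3 (n * (n + 1) * (n + 3) * (n + 8)) + 6 := by
  haveI : Fact (Nat.Prime 3) := ⟨by norm_num⟩
  have hn0 : n ≠ 0 := by omega
  have hP : padicValNat 3 (n * (n + 1) * (n + 3) * (n + 8))
      = padicValNat 3 n + padicValNat 3 (n+1) + padicValNat 3 (n+3) + padicValNat 3 (n+8) := by
    rw [padicValNat.mul (by positivity) (by omega),
      padicValNat.mul (by positivity) (by omega),
      padicValNat.mul (by omega) (by omega)]
  have h8 : n % 8 = 0 ∨ n % 8 = 1 ∨ n % 8 = 2 ∨ n % 8 = 3 ∨ n % 8 = 4 ∨ n % 8 = 5 ∨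
      n % 8 = 6 ∨ n % 8 = 7 := by omega
  rcases h8 with h8 | h8 | h8 | h8 | h8 | h8 | h8 | h8
  · -- n ≡ 0 mod 8
    have h3 : n % 3 = 0 ∨ n % 3 = 1 ∨ n % 3 = 2 := by omega
    rcases h3 with h3 | h3 | h3
    · obtain ⟨t, ht3, heq⟩ := NarAux.extract n (by omega) hn0
      have hj1 : 1 ≤ padicValNat 3 n := by
        by_contra hc
        push_neg at hc
        have hnd := pow_succ_padicValNat_not_dvd (p := 3) hn0
        rw [show padicValNat 3 n = 0 by omega] at hnd
        exact hnd (by simpa using (by omega : 3 ∣ n))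
      obtain ⟨i, hi⟩ : ∃ i, padicValNat 3 n = i + 1 := ⟨padicValNat 3 n - 1, by omega⟩
      rw [hi] at heq
      have hv := NarAux.val_le (NarAux.not_dvd0 i t n ht3 heq)
      omega
    · obtain ⟨t, ht3, heq⟩ := NarAux.extract (n+8) (by omega) (by omega)
      have hj1 : 1 ≤ padicValNat 3 (n+8) := by
        by_contra hc
        push_neg at hc
        have hnd := pow_succ_padicValNat_not_dvd (p := 3) (show n+8 ≠ 0 by omega)
        rw [show padicValNat 3 (n+8) = 0 by omega] at hnd
        exact hnd (by simpa using (by omega : 3 ∣ (n+8)))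
      obtain ⟨i, hi⟩ : ∃ i, padicValNat 3 (n+8) = i + 1 := ⟨padicValNat 3 (n+8) - 1, by omega⟩
      rw [hi] at heq
      have hv := NarAux.val_le (NarAux.not_dvd8 i t n ht3 heq)
      omega
    · have hv := NarAux.val_le (m := narayana n) (k := 2)
        (by simpa using NarAux.not_dvdb (n/24) n (by omega))
      omega
  · have hv := NarAux.val_le (m := narayana n) (k := 0)
      (by simpa using NarAux.not_dvdcov (n/8) 1 n (by omega) (by omega))
    omega
  · have hv := NarAux.val_le (m := narayana n) (k := 0)
      (by simpa using NarAux.not_dvdcov (n/8) 2 n (by omega) (by omega))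
    omega
  · have hv := NarAux.val_le (m := narayana n) (k := 0)
      (by simpa using NarAux.not_dvdcov (n/8) 3 n (by omega) (by omega))
    omega
  · have hv := NarAux.val_le (m := narayana n) (k := 0)
      (by simpa using NarAux.not_dvdcov (n/8) 4 n (by omega) (by omega))
    omega
  · obtain ⟨t, ht3, heq⟩ := NarAux.extract (n+3) (by omega) (by omega)
    have hv := NarAux.val_le (NarAux.not_dvd3 _ t n ht3 heq)
    omega
  · have hv := NarAux.val_le (m := narayana n) (k := 0)
      (by simpa using NarAux.not_dvdcov (n/8) 6 n (by omega) (by omega))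
    omega
  · obtain ⟨t, ht3, heq⟩ := NarAux.extract (n+1) (by omega) (by omega)
    have hv := NarAux.val_le (NarAux.not_dvd1 _ t n ht3 heq)
    omega
end

section
/- The only solutions in positive integers n and m to the equation a_n = m! are (n,m) ∈ {(1,1), (2,1), (3,1), (4,2), (7,3)}. -/
set_option maxRecDepth 100000
set_option maxHeartbeats 4000000
set_option exponentiation.threshold 2000

namespace NF

/-! ### Sequence machinery -/

def step : ℕ × ℕ × ℕ → ℕ × ℕ × ℕ := fun s => (s.2.1, s.2.2, s.1 + s.2.2)

def E (s : ℕ × ℕ × ℕ) (n : ℕ) : ℕ := (step^[n] s).1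

lemma E_rec (s : ℕ × ℕ × ℕ) (n : ℕ) : E s (n+3) = E s (n+2) + E s n := by
  rw [show n + 3 = (n+2) + 1 from rfl]
  unfold E
  rw [Function.iterate_succ_apply' step (n+2), Function.iterate_succ_apply' step (n+1),
    Function.iterate_succ_apply' step n]
  show (step^[n] s).1 + _ = _
  simp only [step]
  omega

lemma narayana_eq (n : ℕ) : narayana n = E (0,1,1) n := by
  induction n using Nat.strong_induction_on with
  | _ n ih =>
    match n with
    | 0 => rfl
    | 1 => rfl
    | 2 => rfl
    | k + 3 => rw [narayana, E_rec, ih (k+2) (by omega), ih k (by omega)]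

/-! ### Growth lemmas -/

lemma nar_rec (n : ℕ) : narayana (n+3) = narayana (n+2) + narayana n := rfl

lemma nar_mono : Monotone narayana := by
  apply monotone_nat_of_le_succ
  intro n
  match n with
  | 0 => norm_num [narayana]
  | 1 => norm_num [narayana]
  | 2 => norm_num [narayana]
  | k + 3 =>
      rw [show k + 3 + 1 = (k + 1) + 3 from by omega, nar_rec (k+1),
        show k + 1 + 2 = k + 3 from by omega]
      exact Nat.le_add_right _ _

lemma nar_two_step : ∀ n, 2 * narayana (n+2) ≤ narayana (n+4) := by
  intro n
  match n with
  | 0 => norm_num [narayana]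
  | k + 1 =>
      have g1 : k + 1 + 2 = k + 3 := by omega
      have g2 : k + 1 + 4 = k + 5 := by omega
      rw [g1, g2]
      have h5 : narayana (k+5) = narayana (k+4) + narayana (k+2) := by
        rw [show k + 5 = (k + 2) + 3 from by omega, nar_rec (k+2),
          show k + 2 + 2 = k + 4 from by omega]
      have h4 : narayana (k+4) = narayana (k+3) + narayana (k+1) := by
        rw [show k + 4 = (k + 1) + 3 from by omega, nar_rec (k+1),
          show k + 1 + 2 = k + 3 from by omega]
      have h3 : narayana (k+3) = narayana (k+2) + narayana k := nar_rec k
      have hm : narayana k ≤ narayana (k+1) := nar_mono (by omega)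
      omega

lemma nar_pow : ∀ k, 2 ^ k ≤ narayana (2*k+2) := by
  intro k
  induction k with
  | zero => norm_num [narayana]
  | succ j ih =>
      have h := nar_two_step (2*j)
      calc 2 ^ (j+1) = 2 * 2 ^ j := by ring
      _ ≤ 2 * narayana (2*j+2) := by omega
      _ ≤ narayana (2*j+4) := h
      _ = narayana (2*(j+1)+2) := by ring_nf

/-! ### Matrix machinery -/

def A : Matrix (Fin 3) (Fin 3) ℤ := !![0,1,0; 0,0,1; 1,0,1]
def Bm : Matrix (Fin 3) (Fin 3) ℤ :=
  !![178892,122063,262179; 262179,178892,384242; 384242,262179,563134]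

lemma Astep (v : Fin 3 → ℤ) : A.mulVec v = ![v 1, v 2, v 0 + v 2] := by
  funext i
  fin_cases i <;> simp [A, Matrix.mulVec, dotProduct, Fin.sum_univ_three]

lemma genL (s : ℕ × ℕ × ℕ) (n : ℕ) :
    (A ^ n).mulVec ![(s.1 : ℤ), s.2.1, s.2.2] = ![(E s n : ℤ), E s (n+1), E s (n+2)] := by
  induction n with
  | zero => rw [pow_zero, Matrix.one_mulVec]; rfl
  | succ k ih =>
      rw [pow_succ', ← Matrix.mulVec_mulVec, ih, Astep]
      funext i
      fin_cases i <;> simp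
      · push_cast [E_rec s k]
        ring

lemma narVec (n : ℕ) :
    (A ^ n).mulVec ![0, 1, 1] = ![(narayana n : ℤ), narayana (n+1), narayana (n+2)] := by
  have := genL (0,1,1) n
  simp only [narayana_eq]
  simpa using this

lemma comp0 (n : ℕ) : ((A ^ n).mulVec ![0, 1, 1]) 0 = (narayana n : ℤ) := by
  rw [narVec]
  rfl

lemma rep1 (n : ℕ) : (A ^ (n+1)).mulVec ![0, 0, 1] = (A ^ n).mulVec ![0, 1, 1] := by
  rw [pow_add, ← Matrix.mulVec_mulVec]
  congr 1
  decide

lemma rep3 (n : ℕ) : (A ^ (n+3)).mulVec ![0, 1, 0] = (A ^ n).mulVec ![0, 1, 1] := by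
  rw [pow_add, ← Matrix.mulVec_mulVec]
  congr 1
  decide

lemma rep8 (n : ℕ) : (A ^ (n+8)).mulVec ![0, -2, 1] = (A ^ n).mulVec ![0, 1, 1] := by
  rw [pow_add, ← Matrix.mulVec_mulVec]
  congr 1
  decide

/-! ### Binomial expansions for matrices -/

lemma bin1 (M : Matrix (Fin 3) (Fin 3) ℤ) (c : ℤ) (q : ℕ) :
    ∃ R, (1 + c • M) ^ q = 1 + ((q : ℤ) * c) • M + (c * c) • R := by
  induction q with
  | zero => exact ⟨0, by simp⟩
  | succ k ih =>
      obtain ⟨R, hR⟩ := ih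
      refine ⟨(k : ℤ) • (M * M) + R + c • (R * M), ?_⟩
      rw [pow_succ, hR]
      push_cast
      ring_nf
      simp only [Matrix.mul_smul, Matrix.smul_mul, smul_smul, add_mul, mul_add, one_mul, mul_one,
        smul_add, add_smul]
      match_scalars <;> ring

lemma bin2 (M : Matrix (Fin 3) (Fin 3) ℤ) (c : ℤ) (q : ℕ) :
    ∃ R, (1 + c • M) ^ q
      = 1 + ((q : ℤ) * c) • M + ((q.choose 2 : ℤ) * (c * c)) • (M * M) + (c * c * c) • R := by
  induction q with
  | zero => exact ⟨0, by simp⟩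
  | succ k ih =>
      obtain ⟨R, hR⟩ := ih
      refine ⟨R + (k.choose 2 : ℤ) • (M * M * M) + c • (R * M), ?_⟩
      rw [pow_succ, hR]
      have hch : ((k+1).choose 2 : ℤ) = (k.choose 2 : ℤ) + (k : ℤ) := by
        rw [Nat.choose_succ_succ]
        push_cast [Nat.choose_one_right]
        ring
      rw [hch]
      push_cast
      ring_nf
      simp only [Matrix.mul_smul, Matrix.smul_mul, smul_smul, add_mul, mul_add, one_mul, mul_one,
        smul_add, add_smul]
      match_scalars <;> ring

/-! ### The base fact `A ^ 46 = 1 + 47 • Bm` -/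

lemma hA46 : A ^ 46 = 1 + (47:ℤ) • Bm := by
  have h0 := genL (1,0,0) 46
  have h1 := genL (0,1,0) 46
  have h2 := genL (0,0,1) 46
  have e0 : E (1,0,0) 46 = 8407925 := by decide
  have e0' : E (1,0,0) 47 = 12322413 := by decide
  have e0'' : E (1,0,0) 48 = 18059374 := by decide
  have e1 : E (0,1,0) 46 = 5736961 := by decide
  have e1' : E (0,1,0) 47 = 8407925 := by decide
  have e1'' : E (0,1,0) 48 = 12322413 := by decide
  have e2 : E (0,0,1) 46 = 12322413 := by decide
  have e2' : E (0,0,1) 47 = 18059374 := by decide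
  have e2'' : E (0,0,1) 48 = 26467299 := by decide
  rw [e0, e0', e0''] at h0
  rw [e1, e1', e1''] at h1
  rw [e2, e2', e2''] at h2
  ext i j
  fin_cases j
  · have := congrFun h0 i
    simp only [Matrix.mulVec, dotProduct, Fin.sum_univ_three] at this
    fin_cases i <;> simp_all [Matrix.one_apply, Bm]
  · have := congrFun h1 i
    simp only [Matrix.mulVec, dotProduct, Fin.sum_univ_three] at this
    fin_cases i <;> simp_all [Matrix.one_apply, Bm]
  · have := congrFun h2 i
    simp only [Matrix.mulVec, dotProduct, Fin.sum_univ_three] at this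
    fin_cases i <;> simp_all [Matrix.one_apply, Bm]

/-! ### Hensel-type lifting -/

lemma hH (j : ℕ) : ∃ D, A ^ (46 * 47 ^ j) = 1 + ((47:ℤ) ^ (j+1)) • (Bm + (47:ℤ) • D) := by
  induction j with
  | zero => exact ⟨0, by simpa using hA46⟩
  | succ k ih =>
      obtain ⟨D, hD⟩ := ih
      set M := Bm + (47:ℤ) • D with hM
      obtain ⟨R, hR⟩ := bin2 M ((47:ℤ) ^ (k+1)) 47
      refine ⟨D + ((23 * 47 ^ k : ℤ)) • (M * M) + ((47:ℤ) ^ (2*k)) • R, ?_⟩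
      have hpow : A ^ (46 * 47 ^ (k+1)) = (A ^ (46 * 47 ^ k)) ^ 47 := by
        rw [← pow_mul]
        ring_nf
      rw [hpow, hD, hR]
      have h2 : ((Nat.choose 47 2 : ℤ)) = 47 * 23 := by norm_num [Nat.choose]
      rw [h2]
      match_scalars <;> push_cast <;> ring

lemma lift_one (j q : ℕ) (u : Fin 3 → ℤ) (hu0 : u 0 = 0)
    (hw : ¬ (47:ℤ) ∣ (Bm.mulVec u) 0)
    (hdvd : (47:ℤ) ^ (j+2) ∣ ((A ^ (46 * 47 ^ j * q)).mulVec u) 0) : 47 ∣ q := by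
  obtain ⟨D, hD⟩ := hH j
  obtain ⟨R, hR⟩ := bin1 (Bm + (47:ℤ) • D) ((47:ℤ) ^ (j+1)) q
  rw [pow_mul, hD, hR] at hdvd
  simp only [Matrix.add_mulVec, Matrix.smul_mulVec, Matrix.one_mulVec,
    Pi.add_apply, Pi.smul_apply, hu0, smul_eq_mul] at hdvd
  set b := (Bm.mulVec u) 0 with hb
  set x := (D.mulVec u) 0 with hx
  set y := (R.mulVec u) 0 with hy
  have key : (47:ℤ) ∣ (q : ℤ) * (b + 47 * x) + 47 ^ (j+1) * y := by
    have h1 : ((47:ℤ) ^ (j+1)) * 47 ∣ ((47:ℤ) ^ (j+1)) * ((q : ℤ) * (b + 47 * x) + 47 ^ (j+1) * y) := by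
      have he : (47:ℤ) ^ (j+2) = 47 ^ (j+1) * 47 := by ring
      rw [← he]
      convert hdvd using 1
      ring
    exact (mul_dvd_mul_iff_left (by positivity : ((47:ℤ) ^ (j+1)) ≠ 0)).mp h1
  have h2 : (47:ℤ) ∣ (q : ℤ) * (b + 47 * x) := by
    have : (47:ℤ) ∣ 47 ^ (j+1) * y := Dvd.dvd.mul_right (dvd_pow_self 47 (Nat.succ_ne_zero j)) y
    omega
  have hp : Prime (47:ℤ) := by norm_num
  rcases hp.dvd_mul.mp h2 with hcase | hcase
  · exact_mod_cast Int.natCast_dvd_natCast.mp (by exact_mod_cast hcase)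
  · exfalso
    apply hw
    omega

/-! ### The zero-set theorem -/

lemma Zbase (n : ℕ) (h : 47 ∣ narayana n) :
    n % 46 = 0 ∨ n % 46 = 38 ∨ n % 46 = 43 ∨ n % 46 = 45 := by
  obtain ⟨R, hR⟩ := bin1 Bm 47 (n / 46)
  have hpow : A ^ n = ((A ^ 46) ^ (n / 46)) * A ^ (n % 46) := by
    rw [← pow_mul, ← pow_add, Nat.div_add_mod]
  have hval : (narayana n : ℤ) = (narayana (n % 46) : ℤ)
      + 47 * ((n / 46 : ℕ) * ((Bm.mulVec ((A ^ (n % 46)).mulVec ![0,1,1])) 0)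
              + 47 * ((R.mulVec ((A ^ (n % 46)).mulVec ![0,1,1])) 0)) := by
    rw [← comp0 n, hpow, hA46, hR, ← Matrix.mulVec_mulVec]
    simp only [Matrix.add_mulVec, Matrix.smul_mulVec, Matrix.one_mulVec,
      Pi.add_apply, Pi.smul_apply, smul_eq_mul, comp0]
    ring
  have h47 : (47:ℤ) ∣ (narayana (n % 46) : ℤ) := by
    have hd : (47:ℤ) ∣ (narayana n : ℤ) := Int.natCast_dvd_natCast.mpr h
    omega
  have h47n : 47 ∣ narayana (n % 46) := Int.natCast_dvd_natCast.mp (by exact_mod_cast h47)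
  have hsmall : ∀ r, r < 46 → 47 ∣ E (0,1,1) r → (r = 0 ∨ r = 38 ∨ r = 43 ∨ r = 45) := by decide
  exact hsmall (n % 46) (Nat.mod_lt n (by norm_num)) (narayana_eq (n % 46) ▸ h47n)

lemma Zstep_case (j n i q : ℕ) (u : Fin 3 → ℤ)
    (hrep : ((A ^ (n+i)).mulVec u) 0 = (narayana n : ℤ))
    (hu0 : u 0 = 0) (hw : ¬ (47:ℤ) ∣ (Bm.mulVec u) 0)
    (hq : n + i = 46 * 47 ^ j * q)
    (h : (47:ℕ) ^ (j+2) ∣ narayana n) : 46 * 47 ^ (j+1) ∣ n + i := by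
  have h47 : 47 ∣ q := by
    apply lift_one j q u hu0 hw
    rw [← hq, hrep]
    exact_mod_cast Int.natCast_dvd_natCast.mpr h
  obtain ⟨q', rfl⟩ := h47
  exact ⟨q', by rw [hq]; ring⟩

theorem Zthm : ∀ j n, (47:ℕ) ^ (j+1) ∣ narayana n →
    ∃ i, (i = 0 ∨ i = 1 ∨ i = 3 ∨ i = 8) ∧ 46 * 47 ^ j ∣ (n + i) := by
  intro j
  induction j with
  | zero =>
      intro n h
      rcases Zbase n (dvd_trans (dvd_pow_self 47 one_ne_zero) h) with h0 | h0 | h0 | h0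
      · exact ⟨0, by tauto, by omega⟩
      · exact ⟨8, by tauto, by omega⟩
      · exact ⟨3, by tauto, by omega⟩
      · exact ⟨1, by tauto, by omega⟩
  | succ k ih =>
      intro n h
      obtain ⟨i, hi, hdvd⟩ := ih n (dvd_trans (pow_dvd_pow 47 (by omega)) h)
      obtain ⟨q, hq⟩ := hdvd
      refine ⟨i, hi, ?_⟩
      rcases hi with rfl | rfl | rfl | rfl
      · refine Zstep_case k n 0 q ![0,1,1] (comp0 n) rfl ?_ hq h
        norm_num [Bm, Matrix.mulVec, dotProduct, Fin.sum_univ_three]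
        decide
      · refine Zstep_case k n 1 q ![0,0,1] (by rw [rep1, comp0]) rfl ?_ hq h
        norm_num [Bm, Matrix.mulVec, dotProduct, Fin.sum_univ_three]
        decide
      · refine Zstep_case k n 3 q ![0,1,0] (by rw [rep3, comp0]) rfl ?_ hq h
        norm_num [Bm, Matrix.mulVec, dotProduct, Fin.sum_univ_three]
        decide
      · refine Zstep_case k n 8 q ![0,-2,1] (by rw [rep8, comp0]) rfl ?_ hq h
        norm_num [Bm, Matrix.mulVec, dotProduct, Fin.sum_univ_three]
        decide

lemma fact_mono {a b : ℕ} (h : a ≤ b) : Nat.factorial a ≤ Nat.factorial b :=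
  Nat.le_of_dvd (Nat.factorial_pos b) (Nat.factorial_dvd_factorial h)

/-! ### Divisibility of factorials by powers of 47 -/

lemma pow_dvd_fact : ∀ k : ℕ, (47:ℕ) ^ k ∣ Nat.factorial (47 * k) := by
  intro k
  induction k with
  | zero => simp
  | succ j ih =>
      have h1 : 47 * (j+1) = (47 * j + 46) + 1 := by ring
      rw [h1, Nat.factorial_succ, pow_succ]
      have h2 : (47:ℕ) ^ j ∣ Nat.factorial (47 * j + 46) :=
        dvd_trans ih (Nat.factorial_dvd_factorial (by omega))
      have h3 : (47:ℕ) ∣ (47 * j + 46) + 1 := ⟨j + 1, by ring⟩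
      calc (47:ℕ) ^ j * 47 ∣ Nat.factorial (47 * j + 46) * ((47 * j + 46) + 1) :=
            mul_dvd_mul h2 h3
      _ = ((47 * j + 46) + 1) * Nat.factorial (47 * j + 46) := by ring

/-! ### The key inequality -/

lemma ineq (j : ℕ) : 2 * (47 * (j + 3) + 46) ^ 2 + 12 ≤ 46 * 47 ^ (j + 2) := by
  induction j with
  | zero => norm_num
  | succ k ih =>
      have h1 : 47 * (k + 1 + 3) + 46 ≤ 2 * (47 * (k + 3) + 46) := by omega
      have h2 : (47 * (k + 1 + 3) + 46)^2 ≤ 4 * (47 * (k + 3) + 46)^2 := by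
        calc (47 * (k + 1 + 3) + 46)^2 ≤ (2 * (47 * (k + 3) + 46))^2 := Nat.pow_le_pow_left h1 2
        _ = 4 * (47 * (k + 3) + 46)^2 := by ring
      have h3 : (47:ℕ) ^ (k + 1 + 2) = 47 ^ (k + 2) * 47 := by
        rw [← pow_succ]
      calc 2 * (47 * (k + 1 + 3) + 46)^2 + 12 ≤ 4 * (2 * (47 * (k + 3) + 46)^2 + 12) := by omega
      _ ≤ 4 * (46 * 47 ^ (k+2)) := by omega
      _ ≤ 46 * 47 ^ (k + 1 + 2) := by rw [h3]; omega

/-! ### Finite verification -/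

def facts : List ℕ := [1, 2, 6, 24, 120, 720, 5040, 40320, 362880, 3628800, 39916800, 479001600, 6227020800, 87178291200, 1307674368000, 20922789888000, 355687428096000, 6402373705728000, 121645100408832000, 2432902008176640000, 51090942171709440000, 1124000727777607680000, 25852016738884976640000, 620448401733239439360000, 15511210043330985984000000, 403291461126605635584000000, 10888869450418352160768000000, 304888344611713860501504000000, 8841761993739701954543616000000, 265252859812191058636308480000000, 8222838654177922817725562880000000, 263130836933693530167218012160000000, 8683317618811886495518194401280000000, 295232799039604140847618609643520000000, 10333147966386144929666651337523200000000, 371993326789901217467999448150835200000000, 13763753091226345046315979581580902400000000, 523022617466601111760007224100074291200000000, 20397882081197443358640281739902897356800000000, 815915283247897734345611269596115894272000000000, 33452526613163807108170062053440751665152000000000, 1405006117752879898543142606244511569936384000000000, 60415263063373835637355132068513997507264512000000000, 2658271574788448768043625811014615890319638528000000000, 119622220865480194561963161495657715064383733760000000000, 5502622159812088949850305428800254892961651752960000000000, 258623241511168180642964355153611979969197632389120000000000, 12413915592536072670862289047373375038521486354677760000000000, 608281864034267560872252163321295376887552831379210240000000000, 30414093201713378043612608166064768844377641568960512000000000000,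 1551118753287382280224243016469303211063259720016986112000000000000, 80658175170943878571660636856403766975289505440883277824000000000000, 4274883284060025564298013753389399649690343788366813724672000000000000, 230843697339241380472092742683027581083278564571807941132288000000000000, 12696403353658275925965100847566516959580321051449436762275840000000000000, 710998587804863451854045647463724949736497978881168458687447040000000000000, 40526919504877216755680601905432322134980384796226602145184481280000000000000, 2350561331282878571829474910515074683828862318181142924420699914240000000000000, 138683118545689835737939019720389406345902876772687432540821294940160000000000000, 8320987112741390144276341183223364380754172606361245952449277696409600000000000000, 507580213877224798800856812176625227226004528988036003099405939480985600000000000000, 31469973260387937525653122354950764088012280797258232192163168247821107200000000000000, 1982608315404440064116146708361898137544773690227268628106279599612729753600000000000000, 126886932185884164103433389335161480802865516174545192198801894375214704230400000000000000, 8247650592082470666723170306785496252186258551345437492922123134388955774976000000000000000, 544344939077443064003729240247842752644293064388798874532860126869671081148416000000000000000, 36471110918188685288249859096605464427167635314049524593701628500267962436943872000000000000000, 2480035542436830599600990418569171581047399201355367672371710738018221445712183296000000000000000, 171122452428141311372468338881272839092270544893520369393648040923257279754140647424000000000000000, 11978571669969891796072783721689098736458938142546425857555362864628009582789845319680000000000000000,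 850478588567862317521167644239926010288584608120796235886430763388588680378079017697280000000000000000, 61234458376886086861524070385274672740778091784697328983823014963978384987221689274204160000000000000000, 4470115461512684340891257138125051110076800700282905015819080092370422104067183317016903680000000000000000, 330788544151938641225953028221253782145683251820934971170611926835411235700971565459250872320000000000000000, 24809140811395398091946477116594033660926243886570122837795894512655842677572867409443815424000000000000000000, 1885494701666050254987932260861146558230394535379329335672487982961844043495537923117729972224000000000000000000, 145183092028285869634070784086308284983740379224208358846781574688061991349156420080065207861248000000000000000000, 11324281178206297831457521158732046228731749579488251990048962825668835325234200766245086213177344000000000000000000, 894618213078297528685144171539831652069808216779571907213868063227837990693501860533361810841010176000000000000000000, 71569457046263802294811533723186532165584657342365752577109445058227039255480148842668944867280814080000000000000000000, 5797126020747367985879734231578109105412357244731625958745865049716390179693892056256184534249745940480000000000000000000, 475364333701284174842138206989404946643813294067993328617160934076743994734899148613007131808479167119360000000000000000000, 39455239697206586511897471180120610571436503407643446275224357528369751562996629334879591940103770870906880000000000000000000, 3314240134565353266999387579130131288000666286242049487118846032383059131291716864129885722968716753156177920000000000000000000, 281710411438055027694947944226061159480056634330574206405101912752560026159795933451040286452340924018275123200000000000000000000,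 24227095383672732381765523203441259715284870552429381750838764496720162249742450276789464634901319465571660595200000000000000000000, 2107757298379527717213600518699389595229783738061356212322972511214654115727593174080683423236414793504734471782400000000000000000000, 185482642257398439114796845645546284380220968949399346684421580986889562184028199319100141244804501828416633516851200000000000000000000, 16507955160908461081216919262453619309839666236496541854913520707833171034378509739399912570787600662729080382999756800000000000000000000, 1485715964481761497309522733620825737885569961284688766942216863704985393094065876545992131370884059645617234469978112000000000000000000000, 135200152767840296255166568759495142147586866476906677791741734597153670771559994765685283954750449427751168336768008192000000000000000000000, 12438414054641307255475324325873553077577991715875414356840239582938137710983519518443046123837041347353107486982656753664000000000000000000000, 1156772507081641574759205162306240436214753229576413535186142281213246807121467315215203289516844845303838996289387078090752000000000000000000000, 108736615665674308027365285256786601004186803580182872307497374434045199869417927630229109214583415458560865651202385340530688000000000000000000000, 10329978488239059262599702099394727095397746340117372869212250571234293987594703124871765375385424468563282236864226607350415360000000000000000000000, 991677934870949689209571401541893801158183648651267795444376054838492222809091499987689476037000748982075094738965754305639874560000000000000000000000, 96192759682482119853328425949563698712343813919172976158104477319333745612481875498805879175589072651261284189679678167647067832320000000000000000000000, 9426890448883247745626185743057242473809693764078951663494238777294707070023223798882976159207729119823605850588608460429412647567360000000000000000000000,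 933262154439441526816992388562667004907159682643816214685929638952175999932299156089414639761565182862536979208272237582511852109168640000000000000000000000, 93326215443944152681699238856266700490715968264381621468592963895217599993229915608941463976156518286253697920827223758251185210916864000000000000000000000000, 9425947759838359420851623124482936749562312794702543768327889353416977599316221476503087861591808346911623490003549599583369706302603264000000000000000000000000, 961446671503512660926865558697259548455355905059659464369444714048531715130254590603314961882364451384985595980362059157503710042865532928000000000000000000000000, 99029007164861804075467152545817733490901658221144924830052805546998766658416222832141441073883538492653516385977292093222882134415149891584000000000000000000000000, 10299016745145627623848583864765044283053772454999072182325491776887871732475287174542709871683888003235965704141638377695179741979175588724736000000000000000000000000, 1081396758240290900504101305800329649720646107774902579144176636573226531909905153326984536526808240339776398934872029657993872907813436816097280000000000000000000000000, 114628056373470835453434738414834942870388487424139673389282723476762012382449946252660360871841673476016298287096435143747350528228224302506311680000000000000000000000000, 12265202031961379393517517010387338887131568154382945052653251412013535324922144249034658613287059061933743916719318560380966506520420000368175349760000000000000000000000000, 1324641819451828974499891837121832599810209360673358065686551152497461815091591578895743130235002378688844343005686404521144382704205360039762937774080000000000000000000000000, 144385958320249358220488210246279753379312820313396029159834075622223337844983482099636001195615259277084033387619818092804737714758384244334160217374720000000000000000000000000,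 15882455415227429404253703127090772871724410234473563207581748318444567162948183030959960131517678520479243672638179990208521148623422266876757623911219200000000000000000000000000, 1762952551090244663872161047107075788761409536026565516041574063347346955087248316436555574598462315773196047662837978913145847497199871623320096254145331200000000000000000000000000, 197450685722107402353682037275992488341277868034975337796656295094902858969771811440894224355027779366597957338237853638272334919686385621811850780464277094400000000000000000000000000, 22311927486598136465966070212187151182564399087952213171022161345724023063584214692821047352118139068425569179220877461124773845924561575264739138192463311667200000000000000000000000000, 2543559733472187557120132004189335234812341496026552301496526393412538629248600474981599398141467853800514886431180030568224218435400019580180261753940817530060800000000000000000000000000, 292509369349301569068815180481773552003419272043053514672100535242441942363589054622883930786268803187059211939585703515345785120071002251720730101703194015956992000000000000000000000000000, 33931086844518982011982560935885732032396635556994207701963662088123265314176330336254535971207181169698868584991941607780111073928236261199604691797570505851011072000000000000000000000000000, 3969937160808720895401959629498630647790406360168322301129748464310422041758630649341780708631240196854767624444057168110272995649603642560353748940315749184568295424000000000000000000000000000, 468452584975429065657431236280838416439267950499862031533310318788629800927518416622330123618486343228862579684398745837012213486653229822121742374957258403779058860032000000000000000000000000000, 55745857612076058813234317117419771556272886109483581752463927935846946310374691578057284710599874844234646982443450754604453404911734348832487342619913750049708004343808000000000000000000000000000,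 6689502913449127057588118054090372586752746333138029810295671352301633557244962989366874165271984981308157637893214090552534408589408121859898481114389650005964960521256960000000000000000000000000000, 809429852527344373968162284544935082997082306309701607045776233628497660426640521713391773997910182738287074185078904956856663439318382745047716214841147650721760223072092160000000000000000000000000000, 98750442008336013624115798714482080125644041369783596059584700502676714572050143649033796427745042294071023050579626404736512939596842694895821378210620013388054747214795243520000000000000000000000000000, 12146304367025329675766243241881295855454217088483382315328918161829235892362167668831156960612640202170735835221294047782591091570411651472186029519906261646730733907419814952960000000000000000000000000000, 1506141741511140879795014161993280686076322918971939407100785852066825250652908790935063463115967385069171243567440461925041295354731044782551067660468376444194611004520057054167040000000000000000000000000000, 188267717688892609974376770249160085759540364871492425887598231508353156331613598866882932889495923133646405445930057740630161919341380597818883457558547055524326375565007131770880000000000000000000000000000000, 23721732428800468856771473051394170805702085973808045661837377170052497697783313457227249544076486314839447086187187275319400401837013955325179315652376928996065123321190898603130880000000000000000000000000000000, 3012660018457659544809977077527059692324164918673621799053346900596667207618480809067860692097713761984609779945772783965563851033300772326297773087851869982500270661791244122597621760000000000000000000000000000000, 385620482362580421735677065923463640617493109590223590278828403276373402575165543560686168588507361534030051833058916347592172932262498857766114955245039357760034644709279247692495585280000000000000000000000000000000,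 49745042224772874403902341504126809639656611137138843145968864022652168932196355119328515747917449637889876686464600208839390308261862352651828829226610077151044469167497022952331930501120000000000000000000000000000000, 6466855489220473672507304395536485253155359447828049608975952322944781961185526165512707047229268452925683969240398027149120740074042105844737747799459310029635780991774612983803150965145600000000000000000000000000000000, 847158069087882051098456875815279568163352087665474498775849754305766436915303927682164623187034167333264599970492141556534816949699515865660644961729169613882287309922474300878212776434073600000000000000000000000000000000, 111824865119600430744996307607616902997562475571842633838412167568361169672820118454045730260688510087990927196104962685462595837360336094267205134948250389032461924909766607715924086489297715200000000000000000000000000000000, 14872707060906857289084508911813048098675809251055070300508818286592035566485075754388082124671571841702793317081960037166525246368924700537538282948117301741317436012998958826217903503076596121600000000000000000000000000000000, 1992942746161518876737324194182948445222558439641379420268181650403332765909000151088003004705990626788174304488982644980314383013435909872030129915047718433336536425741860482713199069412263880294400000000000000000000000000000000, 269047270731805048359538766214698040105045389351586221736204522804449923397715020396880405635308734616403531106012657072342441706813847832724067538531441988500432417475151165166281874370655623839744000000000000000000000000000000000, 36590428819525486576897272205198933454286172951815726156123815101405189582089242773975735166401987907830880230417721361838572072126683305250473185240276110436058808776620558462614334914409164842205184000000000000000000000000000000000,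 5012888748274991661034926292112253883237205694398754483388962668892510972746226260034675717797072343372830591567227826571884373881355612819314826377917827129740056802397016509378163883274055583382110208000000000000000000000000000000000, 691778647261948849222819828311491035886734385827028118707676848307166514238979223884785249055995983385450621636277440066920043595627074569065446040152660143904127838730788278294186615891819670506731208704000000000000000000000000000000000, 96157231969410890041971956135297253988256079629956908500367081914696145479218112119985149618783441690577636407442564169301886059792163365100096999581219760002673769583579570682891939608962934200435638009856000000000000000000000000000000000, 13462012475717524605876073858941615558355851148193967190051391468057460367090535696797920946629681836680869097041958983702264048370902871114013579941370766400374327741701139895604871545254810788060989321379840000000000000000000000000000000000]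

def okp (n v : ℕ) : Bool :=
  (n == 1 && v == 1) || (n == 2 && v == 1) || (n == 3 && v == 1) || (n == 4 && v == 2) ||
    (n == 7 && v == 6)

def good (n v : ℕ) : Bool := !(facts.contains v) || okp n v

def scan : ℕ → ℕ → ℕ × ℕ × ℕ → Bool
  | 0, _, _ => true
  | f+1, n, s => good n s.1 && scan f (n+1) (step s)

lemma hscan : scan 1610 0 (0,1,1) = true := by decide

lemma fmem : ∀ m, m < 141 → 1 ≤ m → facts.contains (Nat.factorial m) = true := by decide

lemma scan_spec : ∀ F n0, scan F n0 (step^[n0] (0,1,1)) = true →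
    ∀ n, n0 ≤ n → n < n0 + F → good n (E (0,1,1) n) = true := by
  intro F
  induction F with
  | zero => intro n0 h n h1 h2; omega
  | succ f ih =>
      intro n0 h n h1 h2
      rw [scan] at h
      simp only [Bool.and_eq_true] at h
      obtain ⟨hg, hs⟩ := h
      rcases eq_or_lt_of_le h1 with rfl | hlt
      · exact hg
      · rw [← Function.iterate_succ_apply' step n0] at hs
        exact ih (n0+1) hs n hlt (by omega)

lemma fact140 : Nat.factorial 140 ≤ 2 ^ 802 := by decide

end NF

theorem narayana_factorial (n m : ℕ) (hn : 0 < n) (hm : 0 < m) :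
    narayana n = Nat.factorial m ↔
      (n, m) = (1, 1) ∨ (n, m) = (2, 1) ∨ (n, m) = (3, 1) ∨ (n, m) = (4, 2) ∨ (n, m) = (7, 3) := by
  constructor
  · intro h
    by_cases hm140 : m ≤ 140
    · -- small case
      have hn1610 : n < 1610 := by
        by_contra hge
        push_neg at hge
        have h1 : narayana 1608 ≤ narayana n := NF.nar_mono (by omega)
        have h2 : (2:ℕ) ^ 803 ≤ narayana 1608 := by
          have := NF.nar_pow 803
          rwa [show 2*803+2 = 1608 from rfl] at this
        have h3 : Nat.factorial m ≤ Nat.factorial 140 := NF.fact_mono hm140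
        have h5 : (2:ℕ) ^ 803 ≤ 2 ^ 802 := by
          calc (2:ℕ) ^ 803 ≤ narayana 1608 := h2
          _ ≤ narayana n := h1
          _ = Nat.factorial m := h
          _ ≤ Nat.factorial 140 := h3
          _ ≤ 2 ^ 802 := NF.fact140
        have := (Nat.pow_le_pow_iff_right (a := 2) (by norm_num)).mp h5
        omega
      have hg := NF.scan_spec 1610 0 NF.hscan n (by omega) (by omega)
      rw [← NF.narayana_eq, h] at hg
      have hc : NF.facts.contains (Nat.factorial m) = true := NF.fmem m (by omega) (by omega)
      rw [NF.good, hc] at hg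
      simp only [Bool.not_true, Bool.false_or, NF.okp, Bool.or_eq_true, Bool.and_eq_true,
        beq_iff_eq] at hg
      have hfact1 : ∀ mm : ℕ, 1 ≤ mm → Nat.factorial mm = 1 → mm = 1 := by
        intro mm h1 h2
        by_contra hne
        have hle : (2:ℕ) ≤ Nat.factorial mm := by
          calc (2:ℕ) = Nat.factorial 2 := rfl
          _ ≤ Nat.factorial mm := NF.fact_mono (by omega)
        omega
      have hfact2 : ∀ mm : ℕ, Nat.factorial mm = 2 → mm = 2 := by
        intro mm h2
        match mm with
        | 0 => simp [Nat.factorial] at h2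
        | 1 => simp [Nat.factorial] at h2
        | 2 => rfl
        | k + 3 =>
            have hle : (6:ℕ) ≤ Nat.factorial (k+3) := by
              calc (6:ℕ) = Nat.factorial 3 := rfl
              _ ≤ Nat.factorial (k+3) := NF.fact_mono (by omega)
            omega
      have hfact6 : ∀ mm : ℕ, Nat.factorial mm = 6 → mm = 3 := by
        intro mm h2
        match mm with
        | 0 => simp [Nat.factorial] at h2
        | 1 => simp [Nat.factorial] at h2
        | 2 => simp [Nat.factorial] at h2
        | 3 => rfl
        | k + 4 =>
            have hle : (24:ℕ) ≤ Nat.factorial (k+4) := by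
              calc (24:ℕ) = Nat.factorial 4 := rfl
              _ ≤ Nat.factorial (k+4) := NF.fact_mono (by omega)
            omega
      rcases hg with ((((⟨rfl, hv1⟩ | ⟨rfl, hv1⟩) | ⟨rfl, hv1⟩) | ⟨rfl, hv1⟩) | ⟨rfl, hv1⟩)
      · exact Or.inl (by rw [hfact1 m (by omega) hv1])
      · exact Or.inr (Or.inl (by rw [hfact1 m (by omega) hv1]))
      · exact Or.inr (Or.inr (Or.inl (by rw [hfact1 m (by omega) hv1])))
      · exact Or.inr (Or.inr (Or.inr (Or.inl (by rw [hfact2 m hv1]))))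
      · exact Or.inr (Or.inr (Or.inr (Or.inr (by rw [hfact6 m hv1]))))
    · -- large case : contradiction
      exfalso
      push_neg at hm140
      set k := m / 47 with hk
      have hk3 : 3 ≤ k := by
        rw [hk]
        omega
      have hdvd47 : (47:ℕ) ^ k ∣ narayana n := by
        rw [h]
        refine dvd_trans (NF.pow_dvd_fact k) (Nat.factorial_dvd_factorial ?_)
        rw [hk]
        calc 47 * (m / 47) = m / 47 * 47 := by ring
        _ ≤ m := Nat.div_mul_le_self m 47
      obtain ⟨i, hi, hdvd⟩ := NF.Zthm (k - 1) n (by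
        have hx : k - 1 + 1 = k := by omega
        rw [hx]
        exact hdvd47)
      have hpos : 0 < n + i := by omega
      have hge : 46 * 47 ^ (k - 1) ≤ n + i := Nat.le_of_dvd hpos hdvd
      have hi8 : i ≤ 8 := by rcases hi with rfl | rfl | rfl | rfl <;> omega
      have hub : narayana n ≤ 2 ^ (m * m) := by
        rw [h]
        calc Nat.factorial m ≤ m ^ m := Nat.factorial_le_pow m
        _ ≤ (2 ^ m) ^ m := Nat.pow_le_pow_left (Nat.lt_two_pow_self (n := m)).le m
        _ = 2 ^ (m * m) := by rw [← pow_mul]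
      have hlb : 2 * (m * m + 1) + 2 ≤ n → False := by
        intro hle
        have h1 : 2 ^ (m*m+1) ≤ narayana (2*(m*m+1)+2) := NF.nar_pow (m*m+1)
        have h2 : narayana (2*(m*m+1)+2) ≤ narayana n := NF.nar_mono hle
        have h3 : (2:ℕ) ^ (m*m+1) ≤ 2 ^ (m*m) := le_trans h1 (le_trans h2 hub)
        have := (Nat.pow_le_pow_iff_right (a := 2) (by norm_num)).mp h3
        omega
      apply hlb
      have hineq := NF.ineq (k - 3)
      have hkk : k - 3 + 3 = k := by omega
      rw [hkk] at hineq
      have hmk : m ≤ 47 * k + 46 := by omega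
      have hsq : m * m ≤ (47 * k + 46) ^ 2 := by
        calc m * m ≤ (47*k+46) * (47*k+46) := Nat.mul_le_mul hmk hmk
        _ = (47*k+46)^2 := (sq _).symm
      have hexp : (47:ℕ) ^ (k - 3 + 2) = 47 ^ (k - 1) := by
        congr 1
        omega
      rw [hexp] at hineq
      omega
  · intro h
    rcases h with h | h | h | h | h <;>
    · simp only [Prod.mk.injEq] at h
      obtain ⟨rfl, rfl⟩ := h
      rw [NF.narayana_eq]
      decide
end
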